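/- arXiv:1012.5251 — 10 statements merged into one kernel-verified Lean document; each statement's English description precedes it below -/
import Mathlib

section
/- Let n, m ≥ 1, N = n·m, and let A ∈ Matrix (Fin N) (Fin N) ℂ be block-upper-triangular (A_{I,J} = 0 for I > J in m×m blocks). Then for every pair of indices (i,j) lying strictly below the block diagonal (i.e. ⌈i/m⌉ > ⌈j/m⌉) and for all indices k, l one has π_{(i,j),(k,l)}(A) = 0. In other words, the Poisson bracket of any constrained-to-zero entry with any other entry vanishes on the set of block-upper-triangular matrices, so the bracket (Poisson) restricts to a Poisson bracket on block-upper-triangular matrices. -/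
open Matrix

noncomputable section

/-- The sign of the difference of two indices, as a complex number
(`sgn : ℤ → ℤ` with `sgn 0 = 0`). -/
def fsgn {N : ℕ} (a b : Fin N) : ℂ := ((((a : ℕ) : ℤ) - ((b : ℕ) : ℤ)).sign : ℤ)

/-- The quadratic Poisson bivector components
`π_{(i,j),(k,l)}(A) = (sgn(j−l)+sgn(i−k))·A_{i,l}·A_{k,j} + (sgn(j−k)+1)·A_{j,l}·A_{i,k}
  + (sgn(i−l)−1)·A_{l,j}·A_{k,i}`. -/
def pb {N : ℕ} (A : Matrix (Fin N) (Fin N) ℂ) (i j k l : Fin N) : ℂ :=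
  (fsgn j l + fsgn i k) * A i l * A k j
    + (fsgn j k + 1) * A j l * A i k
    + (fsgn i l - 1) * A l j * A k i

/-- `A` is block-upper-triangular with respect to `m × m` blocks: the entry `A i j`
vanishes whenever the block index of `i` exceeds the block index of `j`
(0-based indices: block index is `i / m`). -/
def IsBUT (n m : ℕ) (A : Matrix (Fin (n * m)) (Fin (n * m)) ℂ) : Prop :=
  ∀ i j : Fin (n * m), (j : ℕ) / m < (i : ℕ) / m → A i j = 0

lemma fsgn_of_lt {N : ℕ} {a b : Fin N} (h : (a : ℕ) < (b : ℕ)) : fsgn a b = -1 := by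
  unfold fsgn
  have : (((a : ℕ) : ℤ) - ((b : ℕ) : ℤ)) < 0 := by
    have := Int.ofNat_lt.mpr h
    omega
  rw [Int.sign_eq_neg_one_iff_neg.mpr this]
  norm_num

lemma fsgn_of_gt {N : ℕ} {a b : Fin N} (h : (b : ℕ) < (a : ℕ)) : fsgn a b = 1 := by
  unfold fsgn
  have : 0 < (((a : ℕ) : ℤ) - ((b : ℕ) : ℤ)) := by
    have := Int.ofNat_lt.mpr h
    omega
  rw [Int.sign_eq_one_iff_pos.mpr this]
  norm_num

/-- for a block-upper-triangular matrix `A`, the Poisson bracket of any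
constrained-to-zero entry (an entry strictly below the block diagonal) with any other
entry vanishes, so the bracket restricts to block-upper-triangular matrices. -/
theorem poisson_reduction_but (n m : ℕ) (hn : 1 ≤ n) (hm : 1 ≤ m)
    (A : Matrix (Fin (n * m)) (Fin (n * m)) ℂ) (hA : IsBUT n m A)
    (i j : Fin (n * m)) (hij : (j : ℕ) / m < (i : ℕ) / m)
    (k l : Fin (n * m)) :
    pb A i j k l = 0 := by
  -- From nonvanishing of an entry, the row block is ≤ the column block.
  have hnz : ∀ a b : Fin (n * m), A a b ≠ 0 → (a : ℕ) / m ≤ (b : ℕ) / m := by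
    intro a b h
    by_contra hc
    exact h (hA a b (lt_of_not_ge hc))
  have blk : ∀ a b : Fin (n * m), (a : ℕ) / m < (b : ℕ) / m → (a : ℕ) < (b : ℕ) := by
    intro a b h
    by_contra hc
    exact absurd (Nat.div_le_div_right (le_of_not_gt hc)) (not_le.mpr h)
  unfold pb
  have h1 : (fsgn j l + fsgn i k) * A i l * A k j = 0 := by
    by_cases hil : A i l = 0
    · rw [hil]; ring
    by_cases hkj : A k j = 0
    · rw [hkj]; ring
    have hl : (j : ℕ) < (l : ℕ) := blk _ _ (lt_of_lt_of_le hij (hnz _ _ hil))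
    have hk : (k : ℕ) < (i : ℕ) := blk _ _ (lt_of_le_of_lt (hnz _ _ hkj) hij)
    rw [fsgn_of_lt hl, fsgn_of_gt hk]; ring
  have h2 : (fsgn j k + 1) * A j l * A i k = 0 := by
    by_cases hjl : A j l = 0
    · rw [hjl]; ring
    by_cases hik : A i k = 0
    · rw [hik]; ring
    have hk : (j : ℕ) < (k : ℕ) := blk _ _ (lt_of_lt_of_le hij (hnz _ _ hik))
    rw [fsgn_of_lt hk]; ring
  have h3 : (fsgn i l - 1) * A l j * A k i = 0 := by
    by_cases hlj : A l j = 0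
    · rw [hlj]; ring
    have hl : (l : ℕ) < (i : ℕ) := blk _ _ (lt_of_le_of_lt (hnz _ _ hlj) hij)
    rw [fsgn_of_gt hl]; ring
  rw [h1, h2, h3]; ring
end
end

section
/- Let N ≥ 1 and let A ∈ Matrix (Fin N) (Fin N) ℂ be symmetric (Aᵀ = A). Then for all indices i, j, k, l: (a) π_{(i,j),(k,l)}(A) = π_{(j,i),(k,l)}(A) (i.e. the bracket of A_{i,j} − A_{j,i} with any entry vanishes on symmetric matrices, so the Poisson structure restricts to symmetric matrices); and (b) the restricted bracket takes the form π_{(i,j),(k,l)}(A) = (sgn(j−l) + sgn(i−k))·A_{i,l}·A_{k,j} + (sgn(j−k) + sgn(i−l))·A_{j,l}·A_{k,i}. -/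
open Matrix

noncomputable section

/-- the Poisson structure restricts to symmetric matrices:
(a) the bracket of `A_{i,j} − A_{j,i}` with any entry vanishes on symmetric matrices;
(b) the restricted bracket takes the stated symmetric form. -/
theorem poisson_reduction_symmetric (N : ℕ) (hN : 1 ≤ N)
    (A : Matrix (Fin N) (Fin N) ℂ) (hA : Aᵀ = A) (i j k l : Fin N) :
    pb A i j k l = pb A j i k l ∧
      pb A i j k l =
        (fsgn j l + fsgn i k) * A i l * A k j + (fsgn j k + fsgn i l) * A j l * A k i := by
  have h : ∀ a b, A a b = A b a := fun a b => congrFun (congrFun hA.symm a) b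
  constructor <;>
  · simp only [pb, h l j, h k i, h l i, h j k]
    ring
end
end

section
/- Let N ≥ 1 and define the reflection P : Matrix (Fin N) (Fin N) ℂ → Matrix (Fin N) (Fin N) ℂ by P(A)_{i,j} := A_{N+1−j, N+1−i} (transposition with respect to the antidiagonal). Then P is an antiautomorphism of the Poisson algebra: for all A and all indices i, j, k, l, π_{(N+1−j, N+1−i),(N+1−l, N+1−k)}(A) = − π_{(i,j),(k,l)}(P(A)). -/
open Matrix

noncomputable section

/-- The reflection `P(A)_{i,j} := A_{N+1−j, N+1−i}` (transposition with respect to the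
antidiagonal); in 0-based indices, `P(A) i j = A j.rev i.rev`. -/
def reflP {N : ℕ} (A : Matrix (Fin N) (Fin N) ℂ) : Matrix (Fin N) (Fin N) ℂ :=
  fun i j => A j.rev i.rev

lemma fsgn_rev {N : ℕ} (a b : Fin N) : fsgn a.rev b.rev = - fsgn a b := by
  simp only [fsgn, Fin.val_rev]
  push_cast [Nat.cast_sub (Nat.succ_le_of_lt a.isLt), Nat.cast_sub (Nat.succ_le_of_lt b.isLt)]
  rw [show (N:ℤ) - ((a:ℤ) + 1) - ((N:ℤ) - ((b:ℤ) + 1)) = -(a - b) by ring, Int.sign_neg]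
  push_cast; ring

/-- the reflection `P` is an antiautomorphism of the Poisson algebra:
`π_{(N+1−j,N+1−i),(N+1−l,N+1−k)}(A) = − π_{(i,j),(k,l)}(P(A))`. -/
theorem reflection_antiautomorphism (N : ℕ) (hN : 1 ≤ N)
    (A : Matrix (Fin N) (Fin N) ℂ) (i j k l : Fin N) :
    pb A j.rev i.rev l.rev k.rev = - pb (reflP A) i j k l := by
  simp only [pb, reflP, fsgn_rev]
  ring
end
end

section
/- Let N ≥ 1, A ∈ Matrix (Fin N) (Fin N) ℂ, and let λ, μ ∈ ℂ with λ ≠ 0, μ ≠ 0, λ ≠ μ and λ·μ ≠ 1. Set G(λ) := A + λ⁻¹·Aᵀ and G(μ) := A + μ⁻¹·Aᵀ. Then the substitution G(λ) = A + λ⁻¹Aᵀ is a homomorphism from the affine algebra to the finite algebra: for all indices i, j, k, l, π_{(i,j),(k,l)}(A) + λ⁻¹·π_{(j,i),(k,l)}(A) + μ⁻¹·π_{(i,j),(l,k)}(A) + λ⁻¹μ⁻¹·π_{(j,i),(l,k)}(A) = (sgn(i−k) − (λ+μ)/(λ−μ))·G(λ)_{k,j}·G(μ)_{i,l} + (sgn(j−l)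 + (λ+μ)/(λ−μ))·G(μ)_{k,j}·G(λ)_{i,l} + (sgn(j−k) − (1+λμ)/(1−λμ))·G(λ)_{i,k}·G(μ)_{j,l} + (sgn(i−l) + (1+λμ)/(1−λμ))·G(λ)_{l,j}·G(μ)_{k,i}. -/
open Matrix

noncomputable section

/-- the substitution `G(λ) = A + λ⁻¹Aᵀ` is a homomorphism from the affine
(twisted-Yangian) Poisson algebra to the finite algebra: the bracket
`{G_{i,j}(λ), G_{k,l}(μ)}` computed by bilinearity from `π` equals the defining affine
bracket evaluated on `G(λ)`, `G(μ)`. -/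
theorem affine_homomorphism (N : ℕ) (hN : 1 ≤ N)
    (A : Matrix (Fin N) (Fin N) ℂ) (lam mu : ℂ)
    (hlam : lam ≠ 0) (hmu : mu ≠ 0) (hne : lam ≠ mu) (hprod : lam * mu ≠ 1)
    (i j k l : Fin N) :
    pb A i j k l + lam⁻¹ * pb A j i k l + mu⁻¹ * pb A i j l k
        + lam⁻¹ * mu⁻¹ * pb A j i l k
      = (fsgn i k - (lam + mu) / (lam - mu)) * (A + lam⁻¹ • Aᵀ) k j * (A + mu⁻¹ • Aᵀ) i l
        + (fsgn j l + (lam + mu) / (lam - mu)) * (A + mu⁻¹ • Aᵀ) k j * (A + lam⁻¹ • Aᵀ) i l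
        + (fsgn j k - (1 + lam * mu) / (1 - lam * mu)) * (A + lam⁻¹ • Aᵀ) i k * (A + mu⁻¹ • Aᵀ) j l
        + (fsgn i l + (1 + lam * mu) / (1 - lam * mu)) * (A + lam⁻¹ • Aᵀ) l j * (A + mu⁻¹ • Aᵀ) k i := by
  have h1 : lam - mu ≠ 0 := sub_ne_zero.mpr hne
  have h2 : (1 : ℂ) - lam * mu ≠ 0 := sub_ne_zero.mpr (Ne.symm hprod)
  simp only [pb, Matrix.add_apply, Matrix.smul_apply, Matrix.transpose_apply, smul_eq_mul]
  rw [div_eq_mul_inv, div_eq_mul_inv]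
  set u := (lam - mu)⁻¹ with hu
  set v := ((1:ℂ) - lam * mu)⁻¹ with hv
  set c := lam⁻¹ with hc
  set d := mu⁻¹ with hd
  have e1 : (lam - mu) * u = 1 := mul_inv_cancel₀ h1
  have e2 : ((1:ℂ) - lam * mu) * v = 1 := mul_inv_cancel₀ h2
  have e3 : lam * c = 1 := mul_inv_cancel₀ hlam
  have e4 : mu * d = 1 := mul_inv_cancel₀ hmu
  clear_value u v c d
  linear_combination (v * (A l j) * (A k i) + (-1) * v * (A j l) * (A i k) + (-1) * u * (A k j) * (A l i) + u * (A i l) * (A j k) + mu * v * (A k j) * (A l i) + (-1) * mu * v * (A i l) * (A j k) + mu * v * d * (A l j) * (A k i) + (-1) * mu * v * d * (A j l) * (A i k) + (-1) * mu * u * v * d * (A k j) * (A l i) + mu * u * v * d * (A i l) * (A j k) + mu * mu * u * v * (A k j) * (A l i) + (-1) * mu * mu * u * v * (A i l) * (A j k)) * e3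
  + (v * (A l j) * (A k i) + (-1) * v * (A j l) * (A i k) + v * c * (A k j) * (A l i) + (-1) * v * c * (A i l) * (A j k) + 2 * u * (A k j) * (A l i) + (-2) * u * (A i l) * (A j k) + u * c * (A l j) * (A k i) + (-1) * u * c * (A j l) * (A i k) + (-1) * u * v * (A k j) * (A l i) + u * v * (A i l) * (A j k) + (-1) * u * v * c * (A l j) * (A k i) + u * v * c * (A j l) * (A i k) + mu * u * v * c * (A k j) * (A l i) + (-1) * mu * u * v * c * (A i l) * (A j k) + lam * v * c * (A l j) * (A k i) + (-1) * lam * v * c * (A j l) * (A i k) + lam * mu * u * v * c * (A l j) * (A k i) + (-1) * lam * mu * u * v * c * (A j l) * (A i k)) * e4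
  + (d * (A k j) * (A l i) + (-1) * d * (A i l) * (A j k) + c * d * (A l j) * (A k i) + (-1) * c * d * (A j l) * (A i k) + (-1) * v * c * d * (A l j) * (A k i) + v * c * d * (A j l) * (A i k) + (-1) * mu * v * (A k j) * (A l i) + mu * v * (A i l) * (A j k) + mu * v * c * d * (A k j) * (A l i) + (-1) * mu * v * c * d * (A i l) * (A j k) + lam * mu * v * c * d * (A l j) * (A k i) + (-1) * lam * mu * v * c * d * (A j l) * (A i k)) * e1
  + ((A l j) * (A k i) + (-1) * (A j l) * (A i k) + c * (A k j) * (A l i) + (-1) * c * (A i l) * (A j k) + (-1) * u * (A k j) * (A l i) + u * (A i l) * (A j k) + (-1) * u * c * (A l j) * (A k i) + u * c * (A j l) * (A i k) + mu * u * c * (A k j) * (A l i) + (-1) * mu * u * c * (A i l) * (A j k) + lam * u * c * d * (A l j) * (A k i) + (-1) * lam * u * c * d * (A j l) * (A i k)) * e2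
end
end

section
/- Let N ≥ 1, let λ, μ ∈ ℂ with λ ≠ μ and λ·μ ≠ 1, and let X, Y ∈ Matrix (Fin N) (Fin N) ℂ with Y invertible. For indices i, j, k, l define B_{(i,j),(k,l)} := (sgn(i−k) − (λ+μ)/(λ−μ))·X_{k,j}·Y_{i,l} + (sgn(j−l) + (λ+μ)/(λ−μ))·Y_{k,j}·X_{i,l} + (sgn(j−k) − (1+λμ)/(1−λμ))·X_{i,k}·Y_{j,l} + (sgn(i−l) + (1+λμ)/(1−λμ))·X_{l,j}·Y_{k,i}. Then for all i, j: Σ_{k,l} B_{(i,j),(k,l)}·(Y⁻¹)_{l,k} = 0. (This expresses that the coefficients of det 𝒢(μ) are central in the affine Poisson algebra: {𝒢_{i,j}(λ), det 𝒢(μ)} = Σ_{k,l} {𝒢_{i,j}(λ), 𝒢_{k,l}(μ)}·𝒢(μ)⁻¹_{l,k} = 0.) -/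
open Matrix

noncomputable section

/-- The right-hand side of the defining bracket `{𝒢_{i,j}(λ), 𝒢_{k,l}(μ)}` of the affine
(twisted-Yangian) Poisson algebra, with `X = 𝒢(λ)` and `Y = 𝒢(μ)`. -/
def affBr {N : ℕ} (lam mu : ℂ) (X Y : Matrix (Fin N) (Fin N) ℂ) (i j k l : Fin N) : ℂ :=
  (fsgn i k - (lam + mu) / (lam - mu)) * X k j * Y i l
    + (fsgn j l + (lam + mu) / (lam - mu)) * Y k j * X i l
    + (fsgn j k - (1 + lam * mu) / (1 - lam * mu)) * X i k * Y j l
    + (fsgn i l + (1 + lam * mu) / (1 - lam * mu)) * X l j * Y k i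

/-- the coefficients of `det 𝒢(μ)` are central in the affine Poisson
algebra: `{𝒢_{i,j}(λ), det 𝒢(μ)} = Σ_{k,l} {𝒢_{i,j}(λ), 𝒢_{k,l}(μ)} · 𝒢(μ)⁻¹_{l,k} = 0`. -/
theorem det_central_affine (N : ℕ) (hN : 1 ≤ N) (lam mu : ℂ)
    (hne : lam ≠ mu) (hprod : lam * mu ≠ 1)
    (X Y : Matrix (Fin N) (Fin N) ℂ) (hY : IsUnit Y.det) (i j : Fin N) :
    ∑ k : Fin N, ∑ l : Fin N, affBr lam mu X Y i j k l * Y⁻¹ l k = 0 := by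
  have h1 : Y * Y⁻¹ = 1 := mul_nonsing_inv Y hY
  have h2 : Y⁻¹ * Y = 1 := nonsing_inv_mul Y hY
  have hfs : ∀ a : Fin N, fsgn a a = 0 := by intro a; simp [fsgn]
  set c := (lam + mu) / (lam - mu) with hc
  set d := (1 + lam * mu) / (1 - lam * mu) with hd
  have T1 : ∑ k : Fin N, ∑ l : Fin N,
      (fsgn i k - c) * X k j * Y i l * Y⁻¹ l k = -(c * X i j) := by
    have e : ∀ k : Fin N, ∑ l : Fin N, (fsgn i k - c) * X k j * Y i l * Y⁻¹ l k
        = (fsgn i k - c) * X k j * (Y * Y⁻¹) i k := by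
      intro k
      rw [Matrix.mul_apply, Finset.mul_sum]
      exact Finset.sum_congr rfl fun l _ => by ring
    rw [Finset.sum_congr rfl fun k _ => e k, h1]
    simp [Matrix.one_apply, hfs i]
  have T2 : ∑ k : Fin N, ∑ l : Fin N,
      (fsgn j l + c) * Y k j * X i l * Y⁻¹ l k = c * X i j := by
    rw [Finset.sum_comm]
    have e : ∀ l : Fin N, ∑ k : Fin N, (fsgn j l + c) * Y k j * X i l * Y⁻¹ l k
        = (fsgn j l + c) * X i l * (Y⁻¹ * Y) l j := by
      intro l
      rw [Matrix.mul_apply, Finset.mul_sum]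
      exact Finset.sum_congr rfl fun k _ => by ring
    rw [Finset.sum_congr rfl fun l _ => e l, h2]
    simp [Matrix.one_apply, hfs j]
  have T3 : ∑ k : Fin N, ∑ l : Fin N,
      (fsgn j k - d) * X i k * Y j l * Y⁻¹ l k = -(d * X i j) := by
    have e : ∀ k : Fin N, ∑ l : Fin N, (fsgn j k - d) * X i k * Y j l * Y⁻¹ l k
        = (fsgn j k - d) * X i k * (Y * Y⁻¹) j k := by
      intro k
      rw [Matrix.mul_apply, Finset.mul_sum]
      exact Finset.sum_congr rfl fun l _ => by ring
    rw [Finset.sum_congr rfl fun k _ => e k, h1]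
    simp [Matrix.one_apply, hfs j]
  have T4 : ∑ k : Fin N, ∑ l : Fin N,
      (fsgn i l + d) * X l j * Y k i * Y⁻¹ l k = d * X i j := by
    rw [Finset.sum_comm]
    have e : ∀ l : Fin N, ∑ k : Fin N, (fsgn i l + d) * X l j * Y k i * Y⁻¹ l k
        = (fsgn i l + d) * X l j * (Y⁻¹ * Y) l i := by
      intro l
      rw [Matrix.mul_apply, Finset.mul_sum]
      exact Finset.sum_congr rfl fun k _ => by ring
    rw [Finset.sum_congr rfl fun l _ => e l, h2]
    simp [Matrix.one_apply, hfs i]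
  calc ∑ k : Fin N, ∑ l : Fin N, affBr lam mu X Y i j k l * Y⁻¹ l k
      = (∑ k : Fin N, ∑ l : Fin N, (fsgn i k - c) * X k j * Y i l * Y⁻¹ l k)
        + (∑ k : Fin N, ∑ l : Fin N, (fsgn j l + c) * Y k j * X i l * Y⁻¹ l k)
        + (∑ k : Fin N, ∑ l : Fin N, (fsgn j k - d) * X i k * Y j l * Y⁻¹ l k)
        + (∑ k : Fin N, ∑ l : Fin N, (fsgn i l + d) * X l j * Y k i * Y⁻¹ l k) := by
        simp only [affBr, ← Finset.sum_add_distrib]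
        exact Finset.sum_congr rfl fun k _ => Finset.sum_congr rfl fun l _ => by ring
    _ = 0 := by rw [T1, T2, T3, T4]; ring
end
end

section
/- Let N ≥ 1. For all A ∈ Matrix (Fin N) (Fin N) ℂ, all t ∈ ℂ, and all indices i, j: Σ_{k,l} π_{(k,l),(i,j)}(A) · ( adj(A + t·Aᵀ)_{l,k} + t·adj(A + t·Aᵀ)_{k,l} ) = 0, where adj denotes the adjugate matrix. Consequently each coefficient c_k of t^k in the polynomial det(A + t·Aᵀ) is a central element of the Poisson algebra: {c_k, A_{i,j}} = 0 for all i, j. -/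
open Matrix

noncomputable section

lemma fsgn_self {N : ℕ} (a : Fin N) : fsgn a a = 0 := by
  simp [fsgn]

/-- Main abstract computation: if `C` is a two-sided "quasi-inverse" of `B = A + t•Aᵀ`
(i.e. `B*C = C*B = d•1`) and `Aᵀ*C*A = A*C*Aᵀ`, then the Poisson bracket sum vanishes. -/
lemma aux {N : ℕ} (A C : Matrix (Fin N) (Fin N) ℂ) (t d : ℂ)
    (hBC : (A + t • Aᵀ) * C = d • (1 : Matrix (Fin N) (Fin N) ℂ))
    (hCB : C * (A + t • Aᵀ) = d • (1 : Matrix (Fin N) (Fin N) ℂ))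
    (hX : Aᵀ * C * A = A * C * Aᵀ) (i j : Fin N) :
    ∑ k : Fin N, ∑ l : Fin N, pb A k l i j * (C l k + t * C k l) = 0 := by
  classical
  -- inner-sum identities coming from B*C = C*B = d•1
  have hP : ∀ l : Fin N,
      (∑ k : Fin N, (A k j * (C l k + t * C k l) + A j k * (C k l + t * C l k)))
      = (d • (1 : Matrix (Fin N) (Fin N) ℂ)) l j
        + (d • (1 : Matrix (Fin N) (Fin N) ℂ)) j l := by
    intro l
    nth_rewrite 1 [← hCB]
    rw [← hBC, Matrix.mul_apply, Matrix.mul_apply, ← Finset.sum_add_distrib]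
    refine Finset.sum_congr rfl fun k _ => ?_
    simp only [Matrix.add_apply, Matrix.smul_apply, Matrix.transpose_apply, smul_eq_mul]
    ring
  have hQ : ∀ k : Fin N,
      (∑ l : Fin N, (A i l * (C l k + t * C k l) + A l i * (C k l + t * C l k)))
      = (d • (1 : Matrix (Fin N) (Fin N) ℂ)) i k
        + (d • (1 : Matrix (Fin N) (Fin N) ℂ)) k i := by
    intro k
    nth_rewrite 1 [← hBC]
    rw [← hCB, Matrix.mul_apply, Matrix.mul_apply, ← Finset.sum_add_distrib]
    refine Finset.sum_congr rfl fun l _ => ?_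
    simp only [Matrix.add_apply, Matrix.smul_apply, Matrix.transpose_apply, smul_eq_mul]
    ring
  -- triple product identities
  have hYji : (∑ k : Fin N, ∑ l : Fin N, A l j * A k i * C l k) = (Aᵀ * C * A) j i := by
    simp only [Matrix.mul_apply, Matrix.transpose_apply, Finset.sum_mul]
    exact Finset.sum_congr rfl fun k _ => Finset.sum_congr rfl fun l _ => by ring
  have hYij : (∑ k : Fin N, ∑ l : Fin N, A l j * A k i * C k l) = (Aᵀ * C * A) i j := by
    rw [Finset.sum_comm]
    simp only [Matrix.mul_apply, Matrix.transpose_apply, Finset.sum_mul]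
    exact Finset.sum_congr rfl fun l _ => Finset.sum_congr rfl fun k _ => by ring
  have hZji : (∑ k : Fin N, ∑ l : Fin N, A j k * A i l * C k l) = (A * C * Aᵀ) j i := by
    rw [Finset.sum_comm]
    simp only [Matrix.mul_apply, Matrix.transpose_apply, Finset.sum_mul]
    exact Finset.sum_congr rfl fun l _ => Finset.sum_congr rfl fun k _ => by ring
  have hZij : (∑ k : Fin N, ∑ l : Fin N, A j k * A i l * C l k) = (A * C * Aᵀ) i j := by
    simp only [Matrix.mul_apply, Matrix.transpose_apply, Finset.sum_mul]
    exact Finset.sum_congr rfl fun k _ => Finset.sum_congr rfl fun l _ => by ring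
  -- the three grouped sums
  have hT1 : (∑ k : Fin N, ∑ l : Fin N, fsgn l j * A i l *
      (A k j * (C l k + t * C k l) + A j k * (C k l + t * C l k))) = 0 := by
    rw [Finset.sum_comm]
    refine Finset.sum_eq_zero fun l _ => ?_
    rw [← Finset.mul_sum, hP l]
    rcases eq_or_ne l j with rfl | hlj
    · simp [fsgn_self]
    · simp [Matrix.smul_apply, Matrix.one_apply, hlj, hlj.symm]
  have hT2 : (∑ k : Fin N, ∑ l : Fin N, fsgn k i * A k j *
      (A i l * (C l k + t * C k l) + A l i * (C k l + t * C l k))) = 0 := by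
    refine Finset.sum_eq_zero fun k _ => ?_
    rw [← Finset.mul_sum, hQ k]
    rcases eq_or_ne k i with rfl | hki
    · simp [fsgn_self]
    · simp [Matrix.smul_apply, Matrix.one_apply, hki, hki.symm]
  have split1 : (∑ k : Fin N, ∑ l : Fin N, A l j * A k i * (C l k + t * C k l))
      = (∑ k : Fin N, ∑ l : Fin N, A l j * A k i * C l k)
        + t * ∑ k : Fin N, ∑ l : Fin N, A l j * A k i * C k l := by
    rw [Finset.mul_sum, ← Finset.sum_add_distrib]
    refine Finset.sum_congr rfl fun k _ => ?_
    rw [Finset.mul_sum, ← Finset.sum_add_distrib]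
    exact Finset.sum_congr rfl fun l _ => by ring
  have split2 : (∑ k : Fin N, ∑ l : Fin N, A j k * A i l * (C k l + t * C l k))
      = (∑ k : Fin N, ∑ l : Fin N, A j k * A i l * C k l)
        + t * ∑ k : Fin N, ∑ l : Fin N, A j k * A i l * C l k := by
    rw [Finset.mul_sum, ← Finset.sum_add_distrib]
    refine Finset.sum_congr rfl fun k _ => ?_
    rw [Finset.mul_sum, ← Finset.sum_add_distrib]
    exact Finset.sum_congr rfl fun l _ => by ring
  have hT3 : (∑ k : Fin N, ∑ l : Fin N,
      (A l j * A k i * (C l k + t * C k l) - A j k * A i l * (C k l + t * C l k))) = 0 := by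
    have step : (∑ k : Fin N, ∑ l : Fin N,
        (A l j * A k i * (C l k + t * C k l) - A j k * A i l * (C k l + t * C l k)))
        = (∑ k : Fin N, ∑ l : Fin N, A l j * A k i * (C l k + t * C k l))
          - (∑ k : Fin N, ∑ l : Fin N, A j k * A i l * (C k l + t * C l k)) := by
      rw [← Finset.sum_sub_distrib]
      exact Finset.sum_congr rfl fun k _ => Finset.sum_sub_distrib _ _
    rw [step, split1, split2, hYji, hYij, hZji, hZij, hX]
    ring
  -- total of the regrouped summand is zero
  have hT : (∑ k : Fin N, ∑ l : Fin N,
      (fsgn l j * A i l * (A k j * (C l k + t * C k l) + A j k * (C k l + t * C l k))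
        + fsgn k i * A k j * (A i l * (C l k + t * C k l) + A l i * (C k l + t * C l k))
        + (A l j * A k i * (C l k + t * C k l) - A j k * A i l * (C k l + t * C l k)))) = 0 := by
    have expand : ∀ k : Fin N, (∑ l : Fin N,
        (fsgn l j * A i l * (A k j * (C l k + t * C k l) + A j k * (C k l + t * C l k))
          + fsgn k i * A k j * (A i l * (C l k + t * C k l) + A l i * (C k l + t * C l k))
          + (A l j * A k i * (C l k + t * C k l) - A j k * A i l * (C k l + t * C l k))))
        = (∑ l : Fin N, fsgn l j * A i l *
            (A k j * (C l k + t * C k l) + A j k * (C k l + t * C l k)))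
          + (∑ l : Fin N, fsgn k i * A k j *
            (A i l * (C l k + t * C k l) + A l i * (C k l + t * C l k)))
          + (∑ l : Fin N,
            (A l j * A k i * (C l k + t * C k l) - A j k * A i l * (C k l + t * C l k))) := by
      intro k
      rw [← Finset.sum_add_distrib, ← Finset.sum_add_distrib]
    calc (∑ k : Fin N, ∑ l : Fin N, _) = _ := Finset.sum_congr rfl fun k _ => expand k
    _ = (∑ k : Fin N, ∑ l : Fin N, fsgn l j * A i l *
            (A k j * (C l k + t * C k l) + A j k * (C k l + t * C l k)))
          + (∑ k : Fin N, ∑ l : Fin N, fsgn k i * A k j *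
            (A i l * (C l k + t * C k l) + A l i * (C k l + t * C l k)))
          + (∑ k : Fin N, ∑ l : Fin N,
            (A l j * A k i * (C l k + t * C k l) - A j k * A i l * (C k l + t * C l k))) := by
      rw [← Finset.sum_add_distrib, ← Finset.sum_add_distrib]
    _ = 0 := by rw [hT1, hT2, hT3]; ring
  -- symmetrization: 2 * LHS = 2 * (regrouped sum)
  have double : ∀ f : Fin N → Fin N → ℂ,
      (2 : ℂ) * (∑ k : Fin N, ∑ l : Fin N, f k l)
      = ∑ k : Fin N, ∑ l : Fin N, (f k l + f l k) := by
    intro f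
    rw [two_mul]
    nth_rewrite 2 [Finset.sum_comm]
    rw [← Finset.sum_add_distrib]
    exact Finset.sum_congr rfl fun k _ => (Finset.sum_add_distrib).symm
  have key : (2 : ℂ) * (∑ k : Fin N, ∑ l : Fin N, pb A k l i j * (C l k + t * C k l)) = 0 := by
    rw [double (fun k l => pb A k l i j * (C l k + t * C k l)),
      show (0 : ℂ) = (2 : ℂ) *
        (∑ k : Fin N, ∑ l : Fin N,
          (fsgn l j * A i l * (A k j * (C l k + t * C k l) + A j k * (C k l + t * C l k))
            + fsgn k i * A k j * (A i l * (C l k + t * C k l) + A l i * (C k l + t * C l k))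
            + (A l j * A k i * (C l k + t * C k l) - A j k * A i l * (C k l + t * C l k))))
        from by rw [hT, mul_zero],
      double]
    refine Finset.sum_congr rfl fun k _ => Finset.sum_congr rfl fun l _ => ?_
    simp only [pb]
    ring
  have h2 : (2 : ℂ) ≠ 0 := two_ne_zero
  exact (mul_eq_zero.mp key).resolve_left h2

/-- `{det(A + t·Aᵀ), A_{i,j}} = Σ_{k,l} π_{(k,l),(i,j)}(A) ·
(∂ det(A + t·Aᵀ)/∂A_{k,l}) = 0`, where
`∂ det(A + t·Aᵀ)/∂A_{k,l} = adj(A + t·Aᵀ)_{l,k} + t·adj(A + t·Aᵀ)_{k,l}`.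
Consequently each coefficient of `t^k` in `det(A + t·Aᵀ)` is a central element of the
Poisson algebra. -/
theorem polynomial_central_elements (N : ℕ) (hN : 1 ≤ N)
    (A : Matrix (Fin N) (Fin N) ℂ) (t : ℂ) (i j : Fin N) :
    ∑ k : Fin N, ∑ l : Fin N,
      pb A k l i j * ((A + t • Aᵀ).adjugate l k + t * (A + t • Aᵀ).adjugate k l) = 0 := by
  have hX : Aᵀ * (A + t • Aᵀ).adjugate * A = A * (A + t • Aᵀ).adjugate * Aᵀ := by
    rcases eq_or_ne t 0 with rfl | ht
    · simp only [zero_smul, add_zero]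
      rw [Matrix.mul_assoc, Matrix.adjugate_mul, Matrix.mul_adjugate]
      simp [Matrix.mul_smul, Matrix.smul_mul]
    · have hB : t • Aᵀ = (A + t • Aᵀ) - A := by rw [add_sub_cancel_left]
      have h1 : t • (Aᵀ * (A + t • Aᵀ).adjugate * A)
          = t • (A * (A + t • Aᵀ).adjugate * Aᵀ) := by
        calc t • (Aᵀ * (A + t • Aᵀ).adjugate * A)
            = (t • Aᵀ) * (A + t • Aᵀ).adjugate * A := by
              rw [Matrix.smul_mul, Matrix.smul_mul]
          _ = ((A + t • Aᵀ) - A) * (A + t • Aᵀ).adjugate * A := by rw [← hB]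
          _ = ((A + t • Aᵀ) * (A + t • Aᵀ).adjugate) * A
                - A * (A + t • Aᵀ).adjugate * A := by rw [Matrix.sub_mul, Matrix.sub_mul]
          _ = ((A + t • Aᵀ).det • (1 : Matrix (Fin N) (Fin N) ℂ)) * A
                - A * (A + t • Aᵀ).adjugate * A := by rw [Matrix.mul_adjugate]
          _ = (A + t • Aᵀ).det • A - A * (A + t • Aᵀ).adjugate * A := by
              rw [Matrix.smul_mul, Matrix.one_mul]
          _ = A * ((A + t • Aᵀ).adjugate * (A + t • Aᵀ)) - A * (A + t • Aᵀ).adjugate * A := by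
              rw [Matrix.adjugate_mul, Matrix.mul_smul, Matrix.mul_one]
          _ = A * (A + t • Aᵀ).adjugate * ((A + t • Aᵀ) - A) := by
              rw [Matrix.mul_sub, ← Matrix.mul_assoc]
          _ = A * (A + t • Aᵀ).adjugate * (t • Aᵀ) := by rw [← hB]
          _ = t • (A * (A + t • Aᵀ).adjugate * Aᵀ) := by rw [Matrix.mul_smul]
      exact smul_right_injective _ ht h1
  exact aux A (A + t • Aᵀ).adjugate t (A + t • Aᵀ).det
    (Matrix.mul_adjugate _) (Matrix.adjugate_mul _) hX i j
end
end

section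
/- Let N ≥ 1 and 0 ≤ d ≤ ⌊(N−1)/2⌋. For A ∈ Matrix (Fin N) (Fin N) ℂ let M_e denote the e×e lower-left corner submatrix of A (rows N−e+1,…,N, columns 1,…,e), and write Br(e; k,l) := Σ_{r=N−e+1}^{N} Σ_{s=1}^{e} adj(M_e)_{s̄,r̄} · π_{(r,s),(k,l)}(A) for the Poisson bracket {det M_e, A_{k,l}}. Then for all A and all indices k, l: det(M_d) · Br(N−d; k,l) = det(M_{N−d}) · Br(d; k,l). Consequently, wherever det M_d ≠ 0, the rational function det M_{N−d}/det M_d is a central element of the Poisson algebra: {det M_{N−d}/det M_d, A_{k,l}} = 0. -/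
open Matrix

noncomputable section

/-- Global row index in `A` of the `r`-th row of the `e × e` lower-left corner minor. -/
def cornerRow (N e : ℕ) (he : e ≤ N) (r : Fin e) : Fin N :=
  ⟨N - e + r.val, by have := r.isLt; omega⟩

/-- Global column index in `A` of the `s`-th column of the `e × e` lower-left corner minor. -/
def cornerCol (N e : ℕ) (he : e ≤ N) (s : Fin e) : Fin N :=
  ⟨s.val, by have := s.isLt; omega⟩

/-- The `e × e` lower-left corner submatrix `M_e` of `A` (for `e = 0` it is the empty
matrix, with `det M_0 = 1`). -/
def corner (N e : ℕ) (he : e ≤ N) (A : Matrix (Fin N) (Fin N) ℂ) :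
    Matrix (Fin e) (Fin e) ℂ :=
  fun r s => A (cornerRow N e he r) (cornerCol N e he s)

/-- `Br(e; k,l) = {det M_e, A_{k,l}}`, computed by the Leibniz rule via the cofactors
`adj(M_e)_{s̄,r̄} = ∂ det M_e/∂A_{r,s}` (for `e = 0` the empty sum gives `0`). -/
def brCorner (N e : ℕ) (he : e ≤ N) (A : Matrix (Fin N) (Fin N) ℂ) (k l : Fin N) : ℂ :=
  ∑ r : Fin e, ∑ s : Fin e,
    (corner N e he A).adjugate s r *
      pb A (cornerRow N e he r) (cornerCol N e he s) k l

lemma fsgn_lt {N : ℕ} {a b : Fin N} (h : a.val < b.val) : fsgn a b = -1 := by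
  have : (((a : ℕ) : ℤ) - ((b : ℕ) : ℤ)) < 0 := by omega
  simp [fsgn, Int.sign_eq_neg_one_iff_neg.mpr this]

lemma fsgn_gt {N : ℕ} {a b : Fin N} (h : b.val < a.val) : fsgn a b = 1 := by
  have : (0:ℤ) < (((a : ℕ) : ℤ) - ((b : ℕ) : ℤ)) := by omega
  simp [fsgn, Int.sign_eq_one_iff_pos.mpr this]

lemma hcol (N e : ℕ) (he : e ≤ N) (A : Matrix (Fin N) (Fin N) ℂ) (s c : Fin e) :
    ∑ r : Fin e, (corner N e he A).adjugate s r * A (cornerRow N e he r) (cornerCol N e he c)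
      = if s = c then (corner N e he A).det else 0 := by
  have h := congrArg (fun X : Matrix (Fin e) (Fin e) ℂ => X s c)
    ((corner N e he A).adjugate_mul)
  simp only [Matrix.mul_apply, Matrix.smul_apply, Matrix.one_apply, smul_eq_mul,
    mul_ite, mul_one, mul_zero] at h
  simpa [corner] using h

lemma hrow (N e : ℕ) (he : e ≤ N) (A : Matrix (Fin N) (Fin N) ℂ) (c r : Fin e) :
    ∑ s : Fin e, A (cornerRow N e he c) (cornerCol N e he s) * (corner N e he A).adjugate s r
      = if c = r then (corner N e he A).det else 0 := by
  have h := congrArg (fun X : Matrix (Fin e) (Fin e) ℂ => X c r)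
    ((corner N e he A).mul_adjugate)
  simp only [Matrix.mul_apply, Matrix.smul_apply, Matrix.one_apply, smul_eq_mul,
    mul_ite, mul_one, mul_zero] at h
  simpa [corner] using h

def Xsum (N e : ℕ) (he : e ≤ N) (A : Matrix (Fin N) (Fin N) ℂ) (k l : Fin N) : ℂ :=
  ∑ r : Fin e, ∑ s : Fin e,
    (corner N e he A).adjugate s r * A (cornerRow N e he r) l * A k (cornerCol N e he s)

lemma Xsum_col (N e : ℕ) (he : e ≤ N) (A : Matrix (Fin N) (Fin N) ℂ) (k l : Fin N)
    (hl : l.val < e) : Xsum N e he A k l = (corner N e he A).det * A k l := by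
  set l' : Fin e := ⟨l.val, hl⟩ with hl'
  have hC : cornerCol N e he l' = l := Fin.ext rfl
  calc Xsum N e he A k l
      = ∑ s : Fin e, A k (cornerCol N e he s) *
          ∑ r : Fin e, (corner N e he A).adjugate s r *
            A (cornerRow N e he r) (cornerCol N e he l') := by
        rw [Xsum, Finset.sum_comm]
        refine Finset.sum_congr rfl fun s _ => ?_
        rw [Finset.mul_sum]
        refine Finset.sum_congr rfl fun r _ => ?_
        rw [hC]; ring
    _ = ∑ s : Fin e, A k (cornerCol N e he s) *
          (if s = l' then (corner N e he A).det else 0) := by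
        refine Finset.sum_congr rfl fun s _ => ?_
        rw [hcol]
    _ = (corner N e he A).det * A k l := by
        simp only [mul_ite, mul_zero, Finset.sum_ite_eq', Finset.mem_univ, if_true]
        rw [hC]; ring

lemma Xsum_row (N e : ℕ) (he : e ≤ N) (A : Matrix (Fin N) (Fin N) ℂ) (k l : Fin N)
    (hk : N - e ≤ k.val) : Xsum N e he A k l = (corner N e he A).det * A k l := by
  have hk2 : k.val - (N - e) < e := by have := k.isLt; omega
  set k' : Fin e := ⟨k.val - (N - e), hk2⟩ with hk'
  have hR : cornerRow N e he k' = k := Fin.ext (by show N - e + (k.val - (N - e)) = k.val; omega)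
  calc Xsum N e he A k l
      = ∑ r : Fin e, A (cornerRow N e he r) l *
          ∑ s : Fin e, A (cornerRow N e he k') (cornerCol N e he s) *
            (corner N e he A).adjugate s r := by
        rw [Xsum]
        refine Finset.sum_congr rfl fun r _ => ?_
        rw [Finset.mul_sum]
        refine Finset.sum_congr rfl fun s _ => ?_
        rw [hR]; ring
    _ = ∑ r : Fin e, A (cornerRow N e he r) l *
          (if k' = r then (corner N e he A).det else 0) := by
        refine Finset.sum_congr rfl fun r _ => ?_
        rw [hrow]
    _ = (corner N e he A).det * A k l := by
        simp only [mul_ite, mul_zero, Finset.sum_ite_eq, Finset.mem_univ, if_true]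
        rw [hR]; ring

lemma brCorner_eq (N e : ℕ) (he : e ≤ N) (A : Matrix (Fin N) (Fin N) ℂ) (k l : Fin N) :
    brCorner N e he A k l =
      (((if k.val < e then 1 else 0) + (if l.val < e then 1 else 0)
        - (if N - e ≤ k.val then 1 else 0) - (if N - e ≤ l.val then 1 else 0)) : ℂ)
        * (corner N e he A).det * A k l := by
  have hsplit : brCorner N e he A k l =
      (∑ r : Fin e, ∑ s : Fin e, (corner N e he A).adjugate s r *
        (fsgn (cornerCol N e he s) l * A (cornerRow N e he r) l * A k (cornerCol N e he s)))
    + (∑ r : Fin e, ∑ s : Fin e, (corner N e he A).adjugate s r *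
        (fsgn (cornerRow N e he r) k * A (cornerRow N e he r) l * A k (cornerCol N e he s)))
    + (∑ r : Fin e, ∑ s : Fin e, (corner N e he A).adjugate s r *
        ((fsgn (cornerCol N e he s) k + 1) * A (cornerCol N e he s) l * A (cornerRow N e he r) k))
    + (∑ r : Fin e, ∑ s : Fin e, (corner N e he A).adjugate s r *
        ((fsgn (cornerRow N e he r) l - 1) * A l (cornerCol N e he s) * A k (cornerRow N e he r))) := by
    rw [brCorner, ← Finset.sum_add_distrib, ← Finset.sum_add_distrib, ← Finset.sum_add_distrib]
    refine Finset.sum_congr rfl fun r _ => ?_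
    rw [← Finset.sum_add_distrib, ← Finset.sum_add_distrib, ← Finset.sum_add_distrib]
    refine Finset.sum_congr rfl fun s _ => ?_
    rw [pb]; ring
  have e1 : (∑ r : Fin e, ∑ s : Fin e, (corner N e he A).adjugate s r *
        (fsgn (cornerCol N e he s) l * A (cornerRow N e he r) l * A k (cornerCol N e he s)))
      = if l.val < e then 0 else -(Xsum N e he A k l) := by
    by_cases hl : l.val < e
    · rw [if_pos hl]
      set l' : Fin e := ⟨l.val, hl⟩ with hl'
      have hC : cornerCol N e he l' = l := Fin.ext rfl
      rw [Finset.sum_comm]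
      calc (∑ s : Fin e, ∑ r : Fin e, (corner N e he A).adjugate s r *
            (fsgn (cornerCol N e he s) l * A (cornerRow N e he r) l * A k (cornerCol N e he s)))
          = ∑ s : Fin e, fsgn (cornerCol N e he s) l * A k (cornerCol N e he s) *
              ∑ r : Fin e, (corner N e he A).adjugate s r *
                A (cornerRow N e he r) (cornerCol N e he l') := by
            refine Finset.sum_congr rfl fun s _ => ?_
            rw [Finset.mul_sum]
            refine Finset.sum_congr rfl fun r _ => ?_
            rw [hC]; ring
        _ = ∑ s : Fin e, fsgn (cornerCol N e he s) l * A k (cornerCol N e he s) *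
              (if s = l' then (corner N e he A).det else 0) := by
            refine Finset.sum_congr rfl fun s _ => ?_
            rw [hcol]
        _ = 0 := by
            simp only [mul_ite, mul_zero, Finset.sum_ite_eq', Finset.mem_univ, if_true]
            rw [hC, fsgn_self]; ring
    · rw [if_neg hl]
      have : ∀ r s : Fin e, (corner N e he A).adjugate s r *
          (fsgn (cornerCol N e he s) l * A (cornerRow N e he r) l * A k (cornerCol N e he s))
          = -((corner N e he A).adjugate s r * A (cornerRow N e he r) l * A k (cornerCol N e he s)) := by
        intro r s
        rw [fsgn_lt (show (cornerCol N e he s).val < l.val by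
          simp only [cornerCol]; have := s.isLt; omega)]
        ring
      rw [Xsum]
      simp only [this, Finset.sum_neg_distrib]
  have e2 : (∑ r : Fin e, ∑ s : Fin e, (corner N e he A).adjugate s r *
        (fsgn (cornerRow N e he r) k * A (cornerRow N e he r) l * A k (cornerCol N e he s)))
      = if N - e ≤ k.val then 0 else Xsum N e he A k l := by
    by_cases hk : N - e ≤ k.val
    · rw [if_pos hk]
      have hk2 : k.val - (N - e) < e := by have := k.isLt; omega
      set k' : Fin e := ⟨k.val - (N - e), hk2⟩ with hk'
      have hR : cornerRow N e he k' = k := Fin.ext (by show N - e + (k.val - (N - e)) = k.val; omega)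
      calc (∑ r : Fin e, ∑ s : Fin e, (corner N e he A).adjugate s r *
            (fsgn (cornerRow N e he r) k * A (cornerRow N e he r) l * A k (cornerCol N e he s)))
          = ∑ r : Fin e, fsgn (cornerRow N e he r) k * A (cornerRow N e he r) l *
              ∑ s : Fin e, A (cornerRow N e he k') (cornerCol N e he s) *
                (corner N e he A).adjugate s r := by
            refine Finset.sum_congr rfl fun r _ => ?_
            rw [Finset.mul_sum]
            refine Finset.sum_congr rfl fun s _ => ?_
            rw [hR]; ring
        _ = ∑ r : Fin e, fsgn (cornerRow N e he r) k * A (cornerRow N e he r) l *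
              (if k' = r then (corner N e he A).det else 0) := by
            refine Finset.sum_congr rfl fun r _ => ?_
            rw [hrow]
        _ = 0 := by
            simp only [mul_ite, mul_zero, Finset.sum_ite_eq, Finset.mem_univ, if_true]
            rw [hR, fsgn_self]; ring
    · rw [if_neg hk, Xsum]
      refine Finset.sum_congr rfl fun r _ => Finset.sum_congr rfl fun s _ => ?_
      rw [fsgn_gt (show k.val < (cornerRow N e he r).val by
        simp only [cornerRow]; omega)]
      ring
  have e3 : (∑ r : Fin e, ∑ s : Fin e, (corner N e he A).adjugate s r *
        ((fsgn (cornerCol N e he s) k + 1) * A (cornerCol N e he s) l * A (cornerRow N e he r) k))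
      = if k.val < e then (corner N e he A).det * A k l else 0 := by
    by_cases hk : k.val < e
    · rw [if_pos hk]
      set k' : Fin e := ⟨k.val, hk⟩ with hk'
      have hC : cornerCol N e he k' = k := Fin.ext rfl
      rw [Finset.sum_comm]
      calc (∑ s : Fin e, ∑ r : Fin e, (corner N e he A).adjugate s r *
            ((fsgn (cornerCol N e he s) k + 1) * A (cornerCol N e he s) l * A (cornerRow N e he r) k))
          = ∑ s : Fin e, (fsgn (cornerCol N e he s) k + 1) * A (cornerCol N e he s) l *
              ∑ r : Fin e, (corner N e he A).adjugate s r *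
                A (cornerRow N e he r) (cornerCol N e he k') := by
            refine Finset.sum_congr rfl fun s _ => ?_
            rw [Finset.mul_sum]
            refine Finset.sum_congr rfl fun r _ => ?_
            rw [hC]; ring
        _ = ∑ s : Fin e, (fsgn (cornerCol N e he s) k + 1) * A (cornerCol N e he s) l *
              (if s = k' then (corner N e he A).det else 0) := by
            refine Finset.sum_congr rfl fun s _ => ?_
            rw [hcol]
        _ = (corner N e he A).det * A k l := by
            simp only [mul_ite, mul_zero, Finset.sum_ite_eq', Finset.mem_univ, if_true]
            rw [hC, fsgn_self]; ring
    · rw [if_neg hk]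
      refine Finset.sum_eq_zero fun r _ => Finset.sum_eq_zero fun s _ => ?_
      rw [fsgn_lt (show (cornerCol N e he s).val < k.val by
        simp only [cornerCol]; have := s.isLt; omega)]
      ring
  have e4 : (∑ r : Fin e, ∑ s : Fin e, (corner N e he A).adjugate s r *
        ((fsgn (cornerRow N e he r) l - 1) * A l (cornerCol N e he s) * A k (cornerRow N e he r)))
      = if N - e ≤ l.val then -((corner N e he A).det * A k l) else 0 := by
    by_cases hl : N - e ≤ l.val
    · rw [if_pos hl]
      have hl2 : l.val - (N - e) < e := by have := l.isLt; omega
      set l' : Fin e := ⟨l.val - (N - e), hl2⟩ with hl'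
      have hR : cornerRow N e he l' = l := Fin.ext (by show N - e + (l.val - (N - e)) = l.val; omega)
      calc (∑ r : Fin e, ∑ s : Fin e, (corner N e he A).adjugate s r *
            ((fsgn (cornerRow N e he r) l - 1) * A l (cornerCol N e he s) * A k (cornerRow N e he r)))
          = ∑ r : Fin e, (fsgn (cornerRow N e he r) l - 1) * A k (cornerRow N e he r) *
              ∑ s : Fin e, A (cornerRow N e he l') (cornerCol N e he s) *
                (corner N e he A).adjugate s r := by
            refine Finset.sum_congr rfl fun r _ => ?_
            rw [Finset.mul_sum]
            refine Finset.sum_congr rfl fun s _ => ?_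
            rw [hR]; ring
        _ = ∑ r : Fin e, (fsgn (cornerRow N e he r) l - 1) * A k (cornerRow N e he r) *
              (if l' = r then (corner N e he A).det else 0) := by
            refine Finset.sum_congr rfl fun r _ => ?_
            rw [hrow]
        _ = -((corner N e he A).det * A k l) := by
            simp only [mul_ite, mul_zero, Finset.sum_ite_eq, Finset.mem_univ, if_true]
            rw [hR, fsgn_self]; ring
    · rw [if_neg hl]
      refine Finset.sum_eq_zero fun r _ => Finset.sum_eq_zero fun s _ => ?_
      rw [fsgn_gt (show l.val < (cornerRow N e he r).val by
        simp only [cornerRow]; omega)]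
      ring
  rw [hsplit, e1, e2, e3, e4]
  by_cases hl : l.val < e <;> by_cases hk : N - e ≤ k.val
  · simp only [if_pos hl, if_pos hk]
    split_ifs <;> ring
  · rw [if_pos hl, if_neg hk, Xsum_col N e he A k l hl]
    simp only [if_pos hl, if_neg hk]
    split_ifs <;> ring
  · rw [if_neg hl, if_pos hk, Xsum_row N e he A k l hk]
    simp only [if_neg hl, if_pos hk]
    split_ifs <;> ring
  · rw [if_neg hl, if_neg hk]
    simp only [if_neg hl, if_neg hk]
    split_ifs <;> ring

/-- `det(M_d)·{det M_{N−d}, A_{k,l}} = det(M_{N−d})·{det M_d, A_{k,l}}`;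
consequently, wherever `det M_d ≠ 0`, the rational function `det M_{N−d}/det M_d`
is a central element of the Poisson algebra. -/
theorem rational_central_elements (N d : ℕ) (hN : 1 ≤ N) (hd : d ≤ (N - 1) / 2)
    (A : Matrix (Fin N) (Fin N) ℂ) (k l : Fin N) :
    (corner N d (by omega) A).det * brCorner N (N - d) (by omega) A k l
      = (corner N (N - d) (by omega) A).det * brCorner N d (by omega) A k l := by
  rw [brCorner_eq, brCorner_eq]
  have hNd : N - (N - d) = d := by omega
  rw [hNd]
  have hck : (if k.val < N - d then (1:ℂ) else 0) - (if d ≤ k.val then 1 else 0)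
      = (if k.val < d then 1 else 0) - (if N - d ≤ k.val then 1 else 0) := by
    split_ifs <;> first | ring1 | (exfalso; omega)
  have hcl : (if l.val < N - d then (1:ℂ) else 0) - (if d ≤ l.val then 1 else 0)
      = (if l.val < d then 1 else 0) - (if N - d ≤ l.val then 1 else 0) := by
    split_ifs <;> first | ring1 | (exfalso; omega)
  linear_combination ((corner N d (by omega : d ≤ N) A).det *
    (corner N (N - d) (by omega : N - d ≤ N) A).det * A k l) * (hck + hcl)
end
end

section
/- Let N ≥ 1. Define the projections P_{+,1/2}, P_{−,1/2} on Matrix (Fin N) (Fin N) ℂ by (P_{±,1/2} X)_{i,j} := ((1 ± sgn(j−i))/2)·X_{i,j}. For A ∈ Matrix (Fin N) (Fin N) ℂ define P_A(ω) := P_{−,1/2}(ω·A) − P_{+,1/2}(ωᵀ·Aᵀ) and D_A(g) := A·g + gᵀ·A. Then for every A and every ω ∈ Matrix (Fin N) (Fin N) ℂ: Tr( ω · D_A(P_A(ω)) ) = 0. Equivalently, the bilinear form (ω₁, ω₂) ↦ Tr( ω₁ · D_A(P_A(ω₂)) ) on Matrix (Fin N) (Fin N) ℂ is skew-symmetric.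 -/
open Matrix

noncomputable section

/-- The projection `P_{+,1/2}`: `(P_{+,1/2} X)_{i,j} = ((1 + sgn(j−i))/2)·X_{i,j}`. -/
def Pplus {N : ℕ} (X : Matrix (Fin N) (Fin N) ℂ) : Matrix (Fin N) (Fin N) ℂ :=
  fun i j => ((1 + fsgn j i) / 2) * X i j

/-- The projection `P_{−,1/2}`: `(P_{−,1/2} X)_{i,j} = ((1 − sgn(j−i))/2)·X_{i,j}`. -/
def Pminus {N : ℕ} (X : Matrix (Fin N) (Fin N) ℂ) : Matrix (Fin N) (Fin N) ℂ :=
  fun i j => ((1 - fsgn j i) / 2) * X i j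

/-- The map `P_A(ω) = P_{−,1/2}(ω·A) − P_{+,1/2}(ωᵀ·Aᵀ)`. -/
def PA {N : ℕ} (A ω : Matrix (Fin N) (Fin N) ℂ) : Matrix (Fin N) (Fin N) ℂ :=
  Pminus (ω * A) - Pplus (ωᵀ * Aᵀ)

/-- The anchor map `D_A(g) = A·g + gᵀ·A`. -/
def DA {N : ℕ} (A g : Matrix (Fin N) (Fin N) ℂ) : Matrix (Fin N) (Fin N) ℂ :=
  A * g + gᵀ * A

lemma fsgn_antisymm {N : ℕ} (a b : Fin N) : fsgn a b = -fsgn b a := by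
  unfold fsgn
  have : (((a : ℕ) : ℤ) - ((b : ℕ) : ℤ)) = -(((b : ℕ) : ℤ) - ((a : ℕ) : ℤ)) := by ring
  rw [this, Int.sign_neg]
  push_cast
  ring

lemma Ppt {N : ℕ} (X : Matrix (Fin N) (Fin N) ℂ) : Pplus X = (Pminus Xᵀ)ᵀ := by
  ext i j
  simp only [Pplus, Pminus, transpose_apply]
  rw [fsgn_antisymm i j]
  ring

lemma L1 {N : ℕ} (X Y : Matrix (Fin N) (Fin N) ℂ) :
    (X * Pminus Y).trace + (Y * Pminus X).trace = (X * Y).trace := by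
  simp only [trace, diag, mul_apply, Pminus]
  rw [Finset.sum_comm (s := Finset.univ) (t := Finset.univ)
    (f := fun i j => Y i j * ((1 - fsgn i j) / 2 * X j i))]
  rw [← Finset.sum_add_distrib]
  refine Finset.sum_congr rfl fun i _ => ?_
  rw [← Finset.sum_add_distrib]
  refine Finset.sum_congr rfl fun j _ => ?_
  rw [fsgn_antisymm j i]
  ring

lemma L2 {N : ℕ} (X Y : Matrix (Fin N) (Fin N) ℂ) :
    (Xᵀ * Pminus Y).trace = (Yᵀ * Pminus X).trace := by
  simp only [trace, diag, mul_apply, Pminus, transpose_apply]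
  refine Finset.sum_congr rfl fun i _ => Finset.sum_congr rfl fun j _ => by ring

lemma htr {N : ℕ} (M N' : Matrix (Fin N) (Fin N) ℂ) :
    (M * N'ᵀ).trace = (Mᵀ * N').trace := by
  rw [← trace_transpose (M * N'ᵀ), transpose_mul, transpose_transpose, trace_mul_comm]

lemma Bform {N : ℕ} (A ω₁ ω₂ : Matrix (Fin N) (Fin N) ℂ) :
    (ω₁ * DA A (PA A ω₂)).trace =
      ((ω₁*A) * Pminus (ω₂*A)).trace - ((A*ω₁) * Pminus (A*ω₂)).trace
      - ((ω₁*A)ᵀ * Pminus (A*ω₂)).trace + ((A*ω₁)ᵀ * Pminus (ω₂*A)).trace := by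
  have hPA : PA A ω₂ = Pminus (ω₂*A) - (Pminus (A*ω₂))ᵀ := by
    rw [PA, Ppt]
    congr 2
    rw [transpose_mul, transpose_transpose, transpose_transpose]
  set X := Pminus (ω₂*A) with hX
  set Y := Pminus (A*ω₂) with hY
  rw [DA, hPA, transpose_sub, transpose_transpose]
  have expand : ω₁ * (A * (X - Yᵀ) + (Xᵀ - Y) * A)
      = (ω₁*A)*X - (ω₁*A)*Yᵀ + (ω₁*Xᵀ)*A - (ω₁*Y)*A := by noncomm_ring
  rw [expand]
  rw [trace_sub, trace_add, trace_sub]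
  rw [htr (ω₁*A) Y]
  rw [trace_mul_comm (ω₁*Xᵀ) A, ← mul_assoc, htr (A*ω₁) X]
  rw [trace_mul_comm (ω₁*Y) A, ← mul_assoc]
  rw [trace_mul_comm (A*ω₁) Y]
  ring

lemma skew {N : ℕ} (A ω₁ ω₂ : Matrix (Fin N) (Fin N) ℂ) :
    (ω₁ * DA A (PA A ω₂)).trace + (ω₂ * DA A (PA A ω₁)).trace = 0 := by
  rw [Bform, Bform]
  have h1 := L1 (ω₁*A) (ω₂*A)
  have h2 := L1 (A*ω₁) (A*ω₂)
  have h3 := L2 (ω₁*A) (A*ω₂)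
  have h4 := L2 (ω₂*A) (A*ω₁)
  have h5 : ((ω₁*A) * (ω₂*A)).trace = ((A*ω₁) * (A*ω₂)).trace := by
    have e1 : (ω₁*A) * (ω₂*A) = (ω₁*A*ω₂) * A := by noncomm_ring
    rw [e1, trace_mul_comm]
    congr 1
    noncomm_ring
  linear_combination h1 - h2 - h3 - h4 + h5

/-- for every `A` and every `ω`, `Tr(ω · D_A(P_A(ω))) = 0`;
equivalently, the bilinear form `(ω₁, ω₂) ↦ Tr(ω₁ · D_A(P_A(ω₂)))` is
skew-symmetric. -/
theorem bivector_skew_symmetric (N : ℕ) (hN : 1 ≤ N)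
    (A : Matrix (Fin N) (Fin N) ℂ) :
    (∀ ω : Matrix (Fin N) (Fin N) ℂ, (ω * DA A (PA A ω)).trace = 0) ∧
    (∀ ω₁ ω₂ : Matrix (Fin N) (Fin N) ℂ,
      (ω₁ * DA A (PA A ω₂)).trace = -(ω₂ * DA A (PA A ω₁)).trace) := by
  constructor
  · intro ω
    linear_combination (skew A ω ω) / 2
  · intro ω₁ ω₂
    linear_combination skew A ω₁ ω₂
end
end

section
/- Let n ≥ 2, m ≥ 1, N = n·m, and 1 ≤ I ≤ n−1. Let A ∈ Matrix (Fin N) (Fin N) ℂ be block-upper-triangular with the diagonal block A_{I,I} invertible. Define the N×N block matrix B_{I,I+1}(A) equal to the identity except in the 2×2 block submatrix in block rows/columns I, I+1, where it equals [[A_{I,I+1}ᵀ·A_{I,I}^{−T}, −𝟙_m],[A_{I,I}·A_{I,I}^{−T}, 0]]. Then Ã := B_{I,I+1}(A)·A·B_{I,I+1}(A)ᵀ is again block-upper-triangular, and its blocks are: Ã_{I,I} = A_{I+1,I+1}, Ã_{I+1,I+1} = A_{I,I}, Ã_{I,I+1} = A_{I,I+1}ᵀ; for J < I: Ã_{J,I}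 = A_{J,I}·A_{I,I}⁻¹·A_{I,I+1} − A_{J,I+1} and Ã_{J,I+1} = A_{J,I}·A_{I,I}⁻¹·A_{I,I}ᵀ; for J > I+1: Ã_{I,J} = A_{I,I+1}ᵀ·A_{I,I}^{−T}·A_{I,J} − A_{I+1,J} and Ã_{I+1,J} = A_{I,I}·A_{I,I}^{−T}·A_{I,J}; all other blocks coincide with those of A. In particular, if det A_{J,J} = 1 for all J then det Ã_{J,J} = 1 for all J, so the braid transformation β_{I,I+1} maps 𝒜_{n,m} to itself. -/
open Matrix

noncomputable section

/-- The `(K,L)` block (of size `m × m`) of an `nm × nm` matrix. -/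
def blk {n m : ℕ} (A : Matrix (Fin (n * m)) (Fin (n * m)) ℂ) (K L : Fin n) :
    Matrix (Fin m) (Fin m) ℂ :=
  fun a b =>
    A ⟨K.val * m + a.val, by
        have ha := a.isLt
        have h2 : (K.val + 1) * m ≤ n * m := Nat.mul_le_mul_right m K.isLt
        have h3 : K.val * m + m = (K.val + 1) * m := by ring
        omega⟩
      ⟨L.val * m + b.val, by
        have hb := b.isLt
        have h2 : (L.val + 1) * m ≤ n * m := Nat.mul_le_mul_right m L.isLt
        have h3 : L.val * m + m = (L.val + 1) * m := by ring
        omega⟩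

/-- The block index of a global index. -/
def blkIdx {n m : ℕ} (hm : 0 < m) (i : Fin (n * m)) : Fin n :=
  ⟨(i : ℕ) / m, (Nat.div_lt_iff_lt_mul hm).mpr i.isLt⟩

/-- The position of a global index inside its block. -/
def inIdx {n m : ℕ} (hm : 0 < m) (i : Fin (n * m)) : Fin m :=
  ⟨(i : ℕ) % m, Nat.mod_lt _ hm⟩

/-- The braid-group matrix `B_{I,I+1}(A)`: the identity except in the block rows and
columns `I, I' = I+1`, where it equals
`[[A_{I,I+1}ᵀ·A_{I,I}^{−T}, −𝟙_m], [A_{I,I}·A_{I,I}^{−T}, 0]]`. -/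
def braidB {n m : ℕ} (hm : 0 < m) (I I' : Fin n)
    (A : Matrix (Fin (n * m)) (Fin (n * m)) ℂ) : Matrix (Fin (n * m)) (Fin (n * m)) ℂ :=
  fun i j =>
    (if blkIdx hm i = I ∧ blkIdx hm j = I then (blk A I I')ᵀ * ((blk A I I)ᵀ)⁻¹
      else if blkIdx hm i = I ∧ blkIdx hm j = I' then -1
      else if blkIdx hm i = I' ∧ blkIdx hm j = I then blk A I I * ((blk A I I)ᵀ)⁻¹
      else if blkIdx hm i = I' ∧ blkIdx hm j = I' then 0
      else if blkIdx hm i = blkIdx hm j then 1 else 0)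
    (inIdx hm i) (inIdx hm j)

/-- The braid-group action `β_{I,I+1}(A) = B_{I,I+1}(A)·A·B_{I,I+1}(A)ᵀ`. -/
def braidAct {n m : ℕ} (hm : 0 < m) (I I' : Fin n)
    (A : Matrix (Fin (n * m)) (Fin (n * m)) ℂ) : Matrix (Fin (n * m)) (Fin (n * m)) ℂ :=
  braidB hm I I' A * A * (braidB hm I I' A)ᵀ

namespace BraidAux

variable {n m : ℕ}

def emb (K : Fin n) (a : Fin m) : Fin (n * m) :=
  ⟨K.val * m + a.val, by
    have ha := a.isLt
    have h2 : (K.val + 1) * m ≤ n * m := Nat.mul_le_mul_right m K.isLt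
    have h3 : K.val * m + m = (K.val + 1) * m := by ring
    omega⟩

lemma blkIdx_emb (hm : 0 < m) (K : Fin n) (a : Fin m) : blkIdx hm (emb K a) = K := by
  apply Fin.ext
  simp only [blkIdx, emb, Nat.mul_comm K.val m]
  rw [Nat.mul_add_div hm, Nat.div_eq_of_lt a.isLt, Nat.add_zero]

lemma inIdx_emb (hm : 0 < m) (K : Fin n) (a : Fin m) : inIdx hm (emb K a) = a := by
  apply Fin.ext
  simp only [inIdx, emb, Nat.mul_comm K.val m]
  rw [Nat.mul_add_mod, Nat.mod_eq_of_lt a.isLt]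

lemma blk_apply (A : Matrix (Fin (n * m)) (Fin (n * m)) ℂ) (K L : Fin n) (a b : Fin m) :
    blk A K L a b = A (emb K a) (emb L b) := rfl

def embEquiv (hm : 0 < m) : Fin n × Fin m ≃ Fin (n * m) where
  toFun p := emb p.1 p.2
  invFun i := (blkIdx hm i, inIdx hm i)
  left_inv p := by
    ext
    · exact congrArg Fin.val (blkIdx_emb hm p.1 p.2)
    · exact congrArg Fin.val (inIdx_emb hm p.1 p.2)
  right_inv i := by
    apply Fin.ext
    simp only [emb, blkIdx, inIdx]
    exact Nat.div_add_mod' i.val m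

lemma blk_mul (hm : 0 < m) (A B : Matrix (Fin (n * m)) (Fin (n * m)) ℂ) (K L : Fin n) :
    blk (A * B) K L = ∑ J : Fin n, blk A K J * blk B J L := by
  ext a b
  rw [blk_apply, Matrix.mul_apply]
  rw [← Equiv.sum_comp (embEquiv hm) (fun k => A (emb K a) k * B k (emb L b))]
  rw [Fintype.sum_prod_type]
  simp only [Matrix.sum_apply, Matrix.mul_apply, blk_apply, embEquiv, Equiv.coe_fn_mk]

lemma blk_transpose (A : Matrix (Fin (n * m)) (Fin (n * m)) ℂ) (K L : Fin n) :
    blk Aᵀ K L = (blk A L K)ᵀ := rfl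

lemma blk_but (hm : 0 < m) {A : Matrix (Fin (n * m)) (Fin (n * m)) ℂ} (hA : IsBUT n m A)
    {K L : Fin n} (h : L < K) : blk A K L = 0 := by
  ext a b
  rw [blk_apply]
  apply hA
  have h1 : (emb (n := n) K a : ℕ) / m = K := congrArg Fin.val (blkIdx_emb hm K a)
  have h2 : (emb (n := n) L b : ℕ) / m = L := congrArg Fin.val (blkIdx_emb hm L b)
  rw [h1, h2]
  exact h

lemma blk_braidB (hm : 0 < m) (I I' : Fin n) (A : Matrix (Fin (n * m)) (Fin (n * m)) ℂ)
    (K L : Fin n) :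
    blk (braidB hm I I' A) K L =
      if K = I ∧ L = I then (blk A I I')ᵀ * ((blk A I I)ᵀ)⁻¹
      else if K = I ∧ L = I' then -1
      else if K = I' ∧ L = I then blk A I I * ((blk A I I)ᵀ)⁻¹
      else if K = I' ∧ L = I' then 0
      else if K = L then 1 else 0 := by
  ext a b
  rw [blk_apply]
  unfold braidB
  rw [blkIdx_emb, blkIdx_emb, inIdx_emb, inIdx_emb]

lemma sum_ite_two_left (I I' : Fin n) (h : I ≠ I')
    (f : Fin n → Matrix (Fin m) (Fin m) ℂ) (a b : Matrix (Fin m) (Fin m) ℂ) :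
    ∑ J : Fin n, (if J = I then a else if J = I' then b else 0) * f J
      = a * f I + b * f I' := by
  have key : ∀ J : Fin n, (if J = I then a else if J = I' then b else 0) * f J
      = (if J = I then a * f I else 0) + (if J = I' then b * f I' else 0) := by
    intro J
    by_cases h1 : J = I
    · subst h1; simp [h]
    · by_cases h2 : J = I'
      · subst h2; simp [h1]
      · simp [h1, h2]
  rw [Finset.sum_congr rfl fun J _ => key J, Finset.sum_add_distrib]
  simp [Finset.sum_ite_eq']

lemma sum_ite_two_right (I I' : Fin n) (h : I ≠ I')
    (f : Fin n → Matrix (Fin m) (Fin m) ℂ) (a b : Matrix (Fin m) (Fin m) ℂ) :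
    ∑ J : Fin n, f J * (if J = I then a else if J = I' then b else 0)
      = f I * a + f I' * b := by
  have key : ∀ J : Fin n, f J * (if J = I then a else if J = I' then b else 0)
      = (if J = I then f I * a else 0) + (if J = I' then f I' * b else 0) := by
    intro J
    by_cases h1 : J = I
    · subst h1; simp [h]
    · by_cases h2 : J = I'
      · subst h2; simp [h1]
      · simp [h1, h2]
  rw [Finset.sum_congr rfl fun J _ => key J, Finset.sum_add_distrib]
  simp [Finset.sum_ite_eq']

lemma sum_ite_one_left (K : Fin n)
    (f : Fin n → Matrix (Fin m) (Fin m) ℂ) (a : Matrix (Fin m) (Fin m) ℂ) :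
    ∑ J : Fin n, (if J = K then a else 0) * f J = a * f K := by
  have key : ∀ J : Fin n, (if J = K then a else 0) * f J
      = (if J = K then a * f K else 0) := by
    intro J; split_ifs with h1
    · subst h1; rfl
    · simp
  rw [Finset.sum_congr rfl fun J _ => key J]
  simp [Finset.sum_ite_eq']

lemma sum_ite_one_right (K : Fin n)
    (f : Fin n → Matrix (Fin m) (Fin m) ℂ) (a : Matrix (Fin m) (Fin m) ℂ) :
    ∑ J : Fin n, f J * (if J = K then a else 0) = f K * a := by
  have key : ∀ J : Fin n, f J * (if J = K then a else 0)
      = (if J = K then f K * a else 0) := by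
    intro J; split_ifs with h1
    · subst h1; rfl
    · simp
  rw [Finset.sum_congr rfl fun J _ => key J]
  simp [Finset.sum_ite_eq']

end BraidAux

namespace BraidAux

variable {n m : ℕ}

lemma braidB_row_I (hm : 0 < m) {I I' : Fin n} (hII' : I ≠ I')
    (A : Matrix (Fin (n * m)) (Fin (n * m)) ℂ) (L : Fin n) :
    blk (braidB hm I I' A) I L =
      if L = I then (blk A I I')ᵀ * ((blk A I I)ᵀ)⁻¹ else if L = I' then -1 else 0 := by
  rw [blk_braidB]
  by_cases h1 : L = I
  · simp [h1]
  · by_cases h2 : L = I'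
    · simp [h1, h2, Ne.symm hII']
    · simp [h1, h2, hII', Ne.symm h1]

lemma braidB_row_I' (hm : 0 < m) {I I' : Fin n} (hII' : I ≠ I')
    (A : Matrix (Fin (n * m)) (Fin (n * m)) ℂ) (L : Fin n) :
    blk (braidB hm I I' A) I' L =
      if L = I then blk A I I * ((blk A I I)ᵀ)⁻¹ else 0 := by
  rw [blk_braidB]
  by_cases h1 : L = I
  · simp [h1, hII', Ne.symm hII']
  · by_cases h2 : L = I'
    · simp [h1, h2, hII', Ne.symm hII']
    · simp [h1, h2, hII', Ne.symm hII', Ne.symm h2]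

lemma braidB_row_other (hm : 0 < m) {I I' K : Fin n} (hK : K ≠ I) (hK' : K ≠ I')
    (A : Matrix (Fin (n * m)) (Fin (n * m)) ℂ) (L : Fin n) :
    blk (braidB hm I I' A) K L = if L = K then 1 else 0 := by
  rw [blk_braidB]
  by_cases h1 : L = K
  · simp [h1, hK, hK']
  · simp [hK, hK', h1, Ne.symm h1]

lemma blkC_I (hm : 0 < m) {I I' : Fin n} (hII' : I ≠ I')
    (A : Matrix (Fin (n * m)) (Fin (n * m)) ℂ) (L : Fin n) :
    blk (braidB hm I I' A * A) I L
      = (blk A I I')ᵀ * ((blk A I I)ᵀ)⁻¹ * blk A I L - blk A I' L := by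
  rw [blk_mul hm, Finset.sum_congr rfl fun J _ => by rw [braidB_row_I hm hII' A J],
      sum_ite_two_left I I' hII', neg_one_mul, ← sub_eq_add_neg]

lemma blkC_I' (hm : 0 < m) {I I' : Fin n} (hII' : I ≠ I')
    (A : Matrix (Fin (n * m)) (Fin (n * m)) ℂ) (L : Fin n) :
    blk (braidB hm I I' A * A) I' L
      = blk A I I * ((blk A I I)ᵀ)⁻¹ * blk A I L := by
  rw [blk_mul hm, Finset.sum_congr rfl fun J _ => by rw [braidB_row_I' hm hII' A J],
      sum_ite_one_left I]

lemma blkC_other (hm : 0 < m) {I I' K : Fin n} (hK : K ≠ I) (hK' : K ≠ I')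
    (A : Matrix (Fin (n * m)) (Fin (n * m)) ℂ) (L : Fin n) :
    blk (braidB hm I I' A * A) K L = blk A K L := by
  rw [blk_mul hm, Finset.sum_congr rfl fun J _ => by rw [braidB_row_other hm hK hK' A J],
      sum_ite_one_left K, one_mul]

lemma blkAct_colI (hm : 0 < m) {I I' : Fin n} (hII' : I ≠ I')
    (A : Matrix (Fin (n * m)) (Fin (n * m)) ℂ) (K : Fin n) :
    blk (braidAct hm I I' A) K I
      = blk (braidB hm I I' A * A) K I * ((blk A I I)⁻¹ * blk A I I')
        - blk (braidB hm I I' A * A) K I' := by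
  rw [braidAct, blk_mul hm]
  have key : ∀ Q : Fin n, blk (braidB hm I I' A * A) K Q * blk (braidB hm I I' A)ᵀ Q I
      = blk (braidB hm I I' A * A) K Q *
        (if Q = I then ((blk A I I')ᵀ * ((blk A I I)ᵀ)⁻¹)ᵀ else if Q = I' then -1 else 0) := by
    intro Q
    rw [blk_transpose, braidB_row_I hm hII' A Q]
    split_ifs <;> simp
  rw [Finset.sum_congr rfl fun Q _ => key Q, sum_ite_two_right I I' hII', mul_neg_one,
    ← sub_eq_add_neg, Matrix.transpose_mul, Matrix.transpose_transpose,
    Matrix.transpose_nonsing_inv, Matrix.transpose_transpose]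

lemma blkAct_colI' (hm : 0 < m) {I I' : Fin n} (hII' : I ≠ I')
    (A : Matrix (Fin (n * m)) (Fin (n * m)) ℂ) (K : Fin n) :
    blk (braidAct hm I I' A) K I'
      = blk (braidB hm I I' A * A) K I * ((blk A I I)⁻¹ * (blk A I I)ᵀ) := by
  rw [braidAct, blk_mul hm]
  have key : ∀ Q : Fin n, blk (braidB hm I I' A * A) K Q * blk (braidB hm I I' A)ᵀ Q I'
      = blk (braidB hm I I' A * A) K Q *
        (if Q = I then (blk A I I * ((blk A I I)ᵀ)⁻¹)ᵀ else 0) := by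
    intro Q
    rw [blk_transpose, braidB_row_I' hm hII' A Q]
    split_ifs <;> simp
  rw [Finset.sum_congr rfl fun Q _ => key Q, sum_ite_one_right I, Matrix.transpose_mul,
    Matrix.transpose_nonsing_inv, Matrix.transpose_transpose]

lemma blkAct_colOther (hm : 0 < m) {I I' L : Fin n} (hL : L ≠ I) (hL' : L ≠ I')
    (A : Matrix (Fin (n * m)) (Fin (n * m)) ℂ) (K : Fin n) :
    blk (braidAct hm I I' A) K L = blk (braidB hm I I' A * A) K L := by
  rw [braidAct, blk_mul hm]
  have key : ∀ Q : Fin n, blk (braidB hm I I' A * A) K Q * blk (braidB hm I I' A)ᵀ Q L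
      = blk (braidB hm I I' A * A) K Q * (if Q = L then 1 else 0) := by
    intro Q
    rw [blk_transpose, braidB_row_other hm hL hL' A Q]
    split_ifs <;> simp
  rw [Finset.sum_congr rfl fun Q _ => key Q, sum_ite_one_right L, mul_one]

end BraidAux

open BraidAux

/-- the braid transformation `Ã = B_{I,I+1}(A)·A·B_{I,I+1}(A)ᵀ` of a
block-upper-triangular `A` (with `A_{I,I}` invertible) is again block-upper-triangular,
with the stated blocks; in particular it preserves the conditions `det A_{J,J} = 1`,
so `β_{I,I+1}` maps `𝒜_{n,m}` to itself. -/
theorem braid_preserves_but (n m : ℕ) (hn : 2 ≤ n) (hm : 1 ≤ m)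
    (I I' : Fin n) (hI' : (I' : ℕ) = (I : ℕ) + 1)
    (A : Matrix (Fin (n * m)) (Fin (n * m)) ℂ) (hA : IsBUT n m A)
    (hinv : IsUnit (blk A I I).det) :
    IsBUT n m (braidAct hm I I' A) ∧
    blk (braidAct hm I I' A) I I = blk A I' I' ∧
    blk (braidAct hm I I' A) I' I' = blk A I I ∧
    blk (braidAct hm I I' A) I I' = (blk A I I')ᵀ ∧
    (∀ J : Fin n, J < I →
      blk (braidAct hm I I' A) J I = blk A J I * (blk A I I)⁻¹ * blk A I I' - blk A J I' ∧
      blk (braidAct hm I I' A) J I' = blk A J I * (blk A I I)⁻¹ * (blk A I I)ᵀ) ∧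
    (∀ J : Fin n, I' < J →
      blk (braidAct hm I I' A) I J
          = (blk A I I')ᵀ * ((blk A I I)ᵀ)⁻¹ * blk A I J - blk A I' J ∧
      blk (braidAct hm I I' A) I' J = blk A I I * ((blk A I I)ᵀ)⁻¹ * blk A I J) ∧
    (∀ K L : Fin n, K ≠ I → K ≠ I' → L ≠ I → L ≠ I' →
      blk (braidAct hm I I' A) K L = blk A K L) ∧
    ((∀ J : Fin n, (blk A J J).det = 1) → ∀ J : Fin n, (blk (braidAct hm I I' A) J J).det = 1) := by
  have hm' : 0 < m := hm
  have hII' : I ≠ I' := by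
    intro h; subst h; omega
  have hltII' : I < I' := by
    rw [Fin.lt_def]; omega
  have hdetT : IsUnit ((blk A I I)ᵀ).det := by
    rw [Matrix.det_transpose]; exact hinv
  have hMM : blk A I I * (blk A I I)⁻¹ = 1 := Matrix.mul_nonsing_inv _ hinv
  have hTT : ((blk A I I)ᵀ)⁻¹ * (blk A I I)ᵀ = 1 := Matrix.nonsing_inv_mul _ hdetT
  have hzI'I : blk A I' I = 0 := blk_but hm' hA hltII'
  -- claim 1
  have h1 : blk (braidAct hm I I' A) I I = blk A I' I' := by
    rw [blkAct_colI hm' hII' A I, blkC_I hm' hII' A I, blkC_I hm' hII' A I', hzI'I, sub_zero]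
    rw [mul_assoc ((blk A I I')ᵀ * ((blk A I I)ᵀ)⁻¹) (blk A I I) _,
      ← mul_assoc (blk A I I) (blk A I I)⁻¹ (blk A I I'), hMM, one_mul, sub_sub_cancel]
  -- claim 2
  have h2 : blk (braidAct hm I I' A) I' I' = blk A I I := by
    rw [blkAct_colI' hm' hII' A I', blkC_I' hm' hII' A I,
      mul_assoc (blk A I I * ((blk A I I)ᵀ)⁻¹) (blk A I I) _,
      ← mul_assoc (blk A I I) (blk A I I)⁻¹ ((blk A I I)ᵀ), hMM, one_mul,
      mul_assoc (blk A I I) ((blk A I I)ᵀ)⁻¹ ((blk A I I)ᵀ), hTT, mul_one]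
  -- claim 3
  have h3 : blk (braidAct hm I I' A) I I' = (blk A I I')ᵀ := by
    rw [blkAct_colI' hm' hII' A I, blkC_I hm' hII' A I, hzI'I, sub_zero,
      mul_assoc ((blk A I I')ᵀ * ((blk A I I)ᵀ)⁻¹) (blk A I I) _,
      ← mul_assoc (blk A I I) (blk A I I)⁻¹ ((blk A I I)ᵀ), hMM, one_mul,
      mul_assoc ((blk A I I')ᵀ) ((blk A I I)ᵀ)⁻¹ ((blk A I I)ᵀ), hTT, mul_one]
  -- claim 4
  have h4 : ∀ J : Fin n, J < I →
      blk (braidAct hm I I' A) J I = blk A J I * (blk A I I)⁻¹ * blk A I I' - blk A J I' ∧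
      blk (braidAct hm I I' A) J I' = blk A J I * (blk A I I)⁻¹ * (blk A I I)ᵀ := by
    intro J hJ
    have hJI : J ≠ I := ne_of_lt hJ
    have hJI' : J ≠ I' := by
      intro h; subst h; rw [Fin.lt_def] at hJ; omega
    constructor
    · rw [blkAct_colI hm' hII' A J, blkC_other hm' hJI hJI' A I, blkC_other hm' hJI hJI' A I',
        ← mul_assoc]
    · rw [blkAct_colI' hm' hII' A J, blkC_other hm' hJI hJI' A I, ← mul_assoc]
  -- claim 5
  have h5 : ∀ J : Fin n, I' < J →
      blk (braidAct hm I I' A) I J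
          = (blk A I I')ᵀ * ((blk A I I)ᵀ)⁻¹ * blk A I J - blk A I' J ∧
      blk (braidAct hm I I' A) I' J = blk A I I * ((blk A I I)ᵀ)⁻¹ * blk A I J := by
    intro J hJ
    have hJI' : J ≠ I' := (ne_of_lt hJ).symm
    have hJI : J ≠ I := by
      intro h; subst h; rw [Fin.lt_def] at hJ; omega
    constructor
    · rw [blkAct_colOther hm' hJI hJI' A I, blkC_I hm' hII' A J]
    · rw [blkAct_colOther hm' hJI hJI' A I', blkC_I' hm' hII' A J]
  -- claim 6
  have h6 : ∀ K L : Fin n, K ≠ I → K ≠ I' → L ≠ I → L ≠ I' →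
      blk (braidAct hm I I' A) K L = blk A K L := by
    intro K L hK hK' hL hL'
    rw [blkAct_colOther hm' hL hL' A K, blkC_other hm' hK hK' A L]
  -- lower blocks vanish
  have hblk0 : ∀ K L : Fin n, L < K → blk (braidAct hm I I' A) K L = 0 := by
    intro K L hKL
    by_cases hLI : L = I
    · rw [hLI] at hKL ⊢
      rw [blkAct_colI hm' hII' A K]
      by_cases hKI' : K = I'
      · rw [hKI'] at hKL ⊢
        rw [blkC_I' hm' hII' A I, blkC_I' hm' hII' A I',
          mul_assoc (blk A I I * ((blk A I I)ᵀ)⁻¹) (blk A I I) _,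
          ← mul_assoc (blk A I I) (blk A I I)⁻¹ (blk A I I'), hMM, one_mul, sub_self]
      · have hKI : K ≠ I := ne_of_gt hKL
        have hI'K : I' < K := by
          rw [Fin.lt_def] at hKL ⊢
          have := Fin.val_ne_of_ne hKI'
          omega
        rw [blkC_other hm' hKI hKI' A I, blkC_other hm' hKI hKI' A I',
          blk_but hm' hA hKL, blk_but hm' hA hI'K, zero_mul, sub_zero]
    · by_cases hLI' : L = I'
      · rw [hLI'] at hKL ⊢
        have hKI : K ≠ I := by
          intro h; rw [h] at hKL; exact absurd hKL (not_lt_of_gt hltII')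
        have hKI' : K ≠ I' := ne_of_gt hKL
        have hIK : I < K := lt_trans hltII' hKL
        rw [blkAct_colI' hm' hII' A K, blkC_other hm' hKI hKI' A I, blk_but hm' hA hIK,
          zero_mul]
      · rw [blkAct_colOther hm' hLI hLI' A K]
        by_cases hKI : K = I
        · rw [hKI] at hKL ⊢
          have hLI2 : L < I' := lt_trans hKL hltII'
          rw [blkC_I hm' hII' A L, blk_but hm' hA hKL, blk_but hm' hA hLI2, mul_zero,
            sub_zero]
        · by_cases hKI'2 : K = I'
          · rw [hKI'2] at hKL ⊢
            have hLI2 : L < I := by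
              rw [Fin.lt_def] at hKL ⊢
              have := Fin.val_ne_of_ne hLI
              omega
            rw [blkC_I' hm' hII' A L, blk_but hm' hA hLI2, mul_zero]
          · rw [blkC_other hm' hKI hKI'2 A L, blk_but hm' hA hKL]
  have hBUT : IsBUT n m (braidAct hm I I' A) := by
    intro i j hij
    have hi : i = emb (blkIdx hm' i) (inIdx hm' i) := ((embEquiv hm').right_inv i).symm
    have hj : j = emb (blkIdx hm' j) (inIdx hm' j) := ((embEquiv hm').right_inv j).symm
    have key : braidAct hm I I' A i j
        = blk (braidAct hm I I' A) (blkIdx hm' i) (blkIdx hm' j) (inIdx hm' i) (inIdx hm' j) := by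
      rw [blk_apply, ← hi, ← hj]
    rw [key, hblk0 _ _ (by rwa [Fin.lt_def]), Matrix.zero_apply]
  refine ⟨hBUT, h1, h2, h3, h4, h5, h6, ?_⟩
  intro hdet J
  by_cases hJ : J = I
  · rw [hJ, h1]; exact hdet I'
  · by_cases hJ' : J = I'
    · rw [hJ', h2]; exact hdet I
    · rw [h6 J J hJ hJ' hJ hJ']; exact hdet J
end
end

section
/- Let n ≥ 3, m ≥ 1, N = n·m, and 1 ≤ I ≤ n−2. For a block-upper-triangular A ∈ Matrix (Fin N) (Fin N) ℂ with all diagonal m×m blocks invertible, define β_{J,J+1}(A) := B_{J,J+1}(A)·A·B_{J,J+1}(A)ᵀ, where B_{J,J+1}(A) is the identity except in block rows/columns J, J+1 where it equals [[A_{J,J+1}ᵀ·A_{J,J}^{−T}, −𝟙_m],[A_{J,J}·A_{J,J}^{−T}, 0]]. Then the braid relation holds: β_{I,I+1}(β_{I+1,I+2}(β_{I,I+1}(A))) = β_{I+1,I+2}(β_{I,I+1}(β_{I+1,I+2}(A))). (The compositions are well defined because each β permutes the set of diagonal blocks, hence preserves their invertibility.) -/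
open Matrix

noncomputable section

-- ===== auxiliary infrastructure =====


namespace BraidAux

variable {n m : ℕ}

/-- build a global index from block data -/
def mkIdx (K : Fin n) (a : Fin m) : Fin (n * m) :=
  ⟨K.val * m + a.val, by
    have ha := a.isLt
    have h2 : (K.val + 1) * m ≤ n * m := Nat.mul_le_mul_right m K.isLt
    have h3 : K.val * m + m = (K.val + 1) * m := by ring
    omega⟩

lemma blkIdx_mkIdx (hm : 0 < m) (K : Fin n) (a : Fin m) :
    blkIdx hm (mkIdx K a) = K := by
  ext
  simp only [blkIdx, mkIdx]
  rw [Nat.mul_comm K.val m, Nat.mul_add_div hm, Nat.div_eq_of_lt a.isLt]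
  omega

lemma inIdx_mkIdx (hm : 0 < m) (K : Fin n) (a : Fin m) :
    inIdx hm (mkIdx K a) = a := by
  ext
  simp only [inIdx, mkIdx]
  rw [Nat.mul_comm K.val m, Nat.mul_add_mod, Nat.mod_eq_of_lt a.isLt]

lemma mkIdx_blkIdx (hm : 0 < m) (i : Fin (n * m)) :
    mkIdx (blkIdx hm i) (inIdx hm i) = i := by
  ext
  simp only [mkIdx, blkIdx, inIdx]
  rw [Nat.mul_comm]
  exact Nat.div_add_mod _ m

/-- the decomposition equivalence -/
def eqv (hm : 0 < m) : Fin n × Fin m ≃ Fin (n * m) where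
  toFun p := mkIdx p.1 p.2
  invFun i := (blkIdx hm i, inIdx hm i)
  left_inv p := by simp [blkIdx_mkIdx, inIdx_mkIdx]
  right_inv i := mkIdx_blkIdx hm i

/-- globalize a block matrix -/
def toGlob (hm : 0 < m) (f : Fin n → Fin n → Matrix (Fin m) (Fin m) ℂ) :
    Matrix (Fin (n * m)) (Fin (n * m)) ℂ :=
  fun i j => f (blkIdx hm i) (blkIdx hm j) (inIdx hm i) (inIdx hm j)

lemma blk_toGlob (hm : 0 < m) (f : Fin n → Fin n → Matrix (Fin m) (Fin m) ℂ)
    (K L : Fin n) : blk (toGlob hm f) K L = f K L := by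
  funext a b
  show toGlob hm f (mkIdx K a) (mkIdx L b) = _
  rw [toGlob, blkIdx_mkIdx, blkIdx_mkIdx, inIdx_mkIdx, inIdx_mkIdx]

lemma blk_toGlob' (hm : 0 < m) (f : Fin n → Fin n → Matrix (Fin m) (Fin m) ℂ) :
    blk (toGlob hm f) = f := funext fun K => funext fun L => blk_toGlob hm f K L

lemma toGlob_blk (hm : 0 < m) (A : Matrix (Fin (n * m)) (Fin (n * m)) ℂ) :
    toGlob hm (blk A) = A := by
  funext i j
  show blk A _ _ _ _ = A i j
  show A (mkIdx (blkIdx hm i) (inIdx hm i)) (mkIdx (blkIdx hm j) (inIdx hm j)) = A i j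
  rw [mkIdx_blkIdx, mkIdx_blkIdx]

lemma toGlob_inj (hm : 0 < m) : Function.Injective (toGlob (n := n) hm) := by
  intro f g h
  funext K L
  rw [← blk_toGlob hm f K L, ← blk_toGlob hm g K L, h]

/-- block-level multiplication -/
def bmul (f g : Fin n → Fin n → Matrix (Fin m) (Fin m) ℂ) :
    Fin n → Fin n → Matrix (Fin m) (Fin m) ℂ :=
  fun K L => ∑ P, f K P * g P L

/-- block-level transpose -/
def btrans (f : Fin n → Fin n → Matrix (Fin m) (Fin m) ℂ) :
    Fin n → Fin n → Matrix (Fin m) (Fin m) ℂ :=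
  fun K L => (f L K)ᵀ

lemma toGlob_mul (hm : 0 < m) (f g : Fin n → Fin n → Matrix (Fin m) (Fin m) ℂ) :
    toGlob hm f * toGlob hm g = toGlob hm (bmul f g) := by
  funext i j
  rw [Matrix.mul_apply]
  show _ = (∑ P, f (blkIdx hm i) P * g P (blkIdx hm j)) (inIdx hm i) (inIdx hm j)
  rw [Matrix.sum_apply]
  have : ∀ P : Fin n, (f (blkIdx hm i) P * g P (blkIdx hm j)) (inIdx hm i) (inIdx hm j)
      = ∑ c : Fin m, f (blkIdx hm i) P (inIdx hm i) c * g P (blkIdx hm j) c (inIdx hm j) :=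
    fun P => Matrix.mul_apply
  rw [Finset.sum_congr rfl (fun P _ => this P)]
  rw [← Equiv.sum_comp (eqv (n := n) hm)
    (fun k => toGlob hm f i k * toGlob hm g k j), Fintype.sum_prod_type]
  apply Finset.sum_congr rfl
  intro P _
  apply Finset.sum_congr rfl
  intro c _
  show toGlob hm f i (mkIdx P c) * toGlob hm g (mkIdx P c) j = _
  rw [toGlob, toGlob, blkIdx_mkIdx, inIdx_mkIdx]

lemma toGlob_transpose (hm : 0 < m) (f : Fin n → Fin n → Matrix (Fin m) (Fin m) ℂ) :
    (toGlob hm f)ᵀ = toGlob hm (btrans f) := rfl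

/-- block-level braid matrix -/
def bB (I I' : Fin n) (M : Fin n → Fin n → Matrix (Fin m) (Fin m) ℂ) :
    Fin n → Fin n → Matrix (Fin m) (Fin m) ℂ :=
  fun K L =>
    if K = I ∧ L = I then (M I I')ᵀ * ((M I I)ᵀ)⁻¹
    else if K = I ∧ L = I' then -1
    else if K = I' ∧ L = I then M I I * ((M I I)ᵀ)⁻¹
    else if K = I' ∧ L = I' then 0
    else if K = L then 1 else 0

/-- block-level braid action -/
def bAct (I I' : Fin n) (M : Fin n → Fin n → Matrix (Fin m) (Fin m) ℂ) :
    Fin n → Fin n → Matrix (Fin m) (Fin m) ℂ :=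
  bmul (bmul (bB I I' M) M) (btrans (bB I I' M))

lemma braidB_eq (hm : 0 < m) (I I' : Fin n) (A : Matrix (Fin (n * m)) (Fin (n * m)) ℂ) :
    braidB hm I I' A = toGlob hm (bB I I' (blk A)) := rfl

lemma braidAct_eq (hm : 0 < m) (I I' : Fin n) (A : Matrix (Fin (n * m)) (Fin (n * m)) ℂ) :
    braidAct hm I I' A = toGlob hm (bAct I I' (blk A)) := by
  rw [braidAct, braidB_eq]
  conv_lhs => rw [← toGlob_blk hm A]
  rw [toGlob_mul, toGlob_transpose, toGlob_mul, bAct, blk_toGlob' hm]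

lemma blk_braidAct (hm : 0 < m) (I I' : Fin n) (A : Matrix (Fin (n * m)) (Fin (n * m)) ℂ) :
    blk (braidAct hm I I' A) = bAct I I' (blk A) := by
  funext K L
  rw [braidAct_eq, blk_toGlob]

end BraidAux
namespace BraidAux

variable {n m : ℕ}

local notation "R" => Matrix (Fin m) (Fin m) ℂ

/-- elementary 2-block matrix -/
def E2 (I J : Fin n) (u v : R) : Fin n → Fin n → R :=
  fun K L =>
    if K = I then (if L = I then u else if L = J then -1 else 0)
    else if K = J then (if L = I then v else 0)
    else if K = L then 1 else 0

lemma bB_eq_E2 (I J : Fin n) (hIJ : I ≠ J) (M : Fin n → Fin n → R) :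
    bB I J M = E2 I J ((M I J)ᵀ * ((M I I)ᵀ)⁻¹) (M I I * ((M I I)ᵀ)⁻¹) := by
  funext K L
  have hJI : ¬ J = I := fun h => hIJ h.symm
  unfold bB E2
  by_cases h1 : K = I
  · have h1' : ¬ K = J := by rw [h1]; exact hIJ
    by_cases h2 : L = I
    · simp [hIJ, hJI, h1, h2]
    · by_cases h3 : L = J
      · simp [hIJ, hJI, h1, h1', h2, h3]
      · have h4 : ¬ K = L := by rw [h1]; intro h; exact h2 h.symm
        have h5 : ¬ I = L := fun h => h2 h.symm
        simp [hIJ, hJI, h1, h1', h2, h3, h4, h5]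
  · by_cases h2 : K = J
    · have h2' : ¬ K = I := h1
      by_cases h3 : L = I
      · simp [hIJ, hJI, h1, h2, h3]
      · by_cases h4 : L = J
        · have h5 : K = L := by rw [h2, h4]
          simp [hIJ, hJI, h1, h2, h3, h4, h5]
        · have h5 : ¬ K = L := by rw [h2]; intro h; exact h4 h.symm
          have h6 : ¬ J = L := fun h => h4 h.symm
          simp [hIJ, hJI, h1, h2, h3, h4, h5, h6]
    · simp [hIJ, hJI, h1, h2]

/-- row operations: multiplying by E2 on the left -/
lemma bmul_E2_left (I J : Fin n) (hIJ : I ≠ J) (u v : R) (g : Fin n → Fin n → R) :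
    bmul (E2 I J u v) g =
      fun K L => if K = I then u * g I L - g J L
        else if K = J then v * g I L else g K L := by
  funext K L
  have hJI : ¬ J = I := fun h => hIJ h.symm
  show (∑ P, E2 I J u v K P * g P L) = _
  by_cases hKI : K = I
  · rw [if_pos hKI]
    have key : ∀ P : Fin n, E2 I J u v K P * g P L
        = (if P = I then u * g I L else 0) + (if P = J then -(g J L) else 0) := by
      intro P
      by_cases hPI : P = I
      · have hPJ : ¬ P = J := by rw [hPI]; exact hIJ
        simp [hIJ, hJI, E2, hKI, hPI, hPJ]
      · by_cases hPJ : P = J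
        · simp [hIJ, hJI, E2, hKI, hPI, hPJ]
        · simp [hIJ, hJI, E2, hKI, hPI, hPJ]
    rw [Finset.sum_congr rfl (fun P _ => key P), Finset.sum_add_distrib]
    simp [hIJ, hJI, sub_eq_add_neg]
  · rw [if_neg hKI]
    by_cases hKJ : K = J
    · rw [if_pos hKJ]
      have key : ∀ P : Fin n, E2 I J u v K P * g P L
          = (if P = I then v * g I L else 0) := by
        intro P
        by_cases hPI : P = I
        · simp [hIJ, hJI, E2, hKI, hKJ, hPI]
        · simp [hIJ, hJI, E2, hKI, hKJ, hPI]
      rw [Finset.sum_congr rfl (fun P _ => key P)]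
      simp
    · rw [if_neg hKJ]
      have key : ∀ P : Fin n, E2 I J u v K P * g P L
          = (if P = K then g K L else 0) := by
        intro P
        by_cases hPK : P = K
        · simp [hIJ, hJI, E2, hKI, hKJ, hPK]
        · have hKP : ¬ K = P := fun h => hPK h.symm
          simp [hIJ, hJI, E2, hKI, hKJ, hPK, hKP]
      rw [Finset.sum_congr rfl (fun P _ => key P)]
      simp

lemma btrans_E2 (I J : Fin n) (hIJ : I ≠ J) (u v : R) :
    btrans (E2 I J u v) = fun K L =>
      if L = I then (if K = I then uᵀ else if K = J then -1 else 0)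
      else if L = J then (if K = I then vᵀ else 0)
      else if K = L then 1 else 0 := by
  funext K L
  have hJI : ¬ J = I := fun h => hIJ h.symm
  show (E2 I J u v L K)ᵀ = _
  unfold E2
  by_cases h1 : L = I
  · rw [if_pos h1, if_pos h1]
    by_cases h2 : K = I
    · rw [if_pos h2, if_pos h2]
    · rw [if_neg h2, if_neg h2]
      by_cases h3 : K = J
      · simp [h3]
      · simp [h3]
  · rw [if_neg h1, if_neg h1]
    by_cases h2 : L = J
    · rw [if_pos h2, if_pos h2]
      by_cases h3 : K = I
      · simp [h3]
      · simp [h3]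
    · rw [if_neg h2, if_neg h2]
      by_cases h3 : K = L
      · have h3' : L = K := h3.symm
        rw [if_pos h3', if_pos h3]; simp
      · have h3' : ¬ L = K := fun h => h3 h.symm
        simp [h3, h3']

/-- column operations: multiplying by (E2)ᵀ on the right -/
lemma bmul_E2_right (I J : Fin n) (hIJ : I ≠ J) (u v : R) (g : Fin n → Fin n → R) :
    bmul g (btrans (E2 I J u v)) =
      fun K L => if L = I then g K I * uᵀ - g K J
        else if L = J then g K I * vᵀ else g K L := by
  funext K L
  have hJI : ¬ J = I := fun h => hIJ h.symm
  show (∑ P, g K P * btrans (E2 I J u v) P L) = _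
  rw [btrans_E2 I J hIJ]
  by_cases hLI : L = I
  · rw [if_pos hLI]
    have key : ∀ P : Fin n, (g K P *
        if L = I then (if P = I then uᵀ else if P = J then -1 else 0)
        else if L = J then (if P = I then vᵀ else 0)
        else if P = L then 1 else 0)
        = (if P = I then g K I * uᵀ else 0) + (if P = J then -(g K J) else 0) := by
      intro P
      by_cases hPI : P = I
      · have hPJ : ¬ P = J := by rw [hPI]; exact hIJ
        simp [hIJ, hJI, hLI, hPI, hPJ]
      · by_cases hPJ : P = J
        · simp [hIJ, hJI, hLI, hPI, hPJ]
        · simp [hIJ, hJI, hLI, hPI, hPJ]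
    rw [Finset.sum_congr rfl (fun P _ => key P), Finset.sum_add_distrib]
    simp [hIJ, hJI, sub_eq_add_neg]
  · rw [if_neg hLI]
    by_cases hLJ : L = J
    · rw [if_pos hLJ]
      have key : ∀ P : Fin n, (g K P *
          if L = I then (if P = I then uᵀ else if P = J then -1 else 0)
          else if L = J then (if P = I then vᵀ else 0)
          else if P = L then 1 else 0)
          = (if P = I then g K I * vᵀ else 0) := by
        intro P
        by_cases hPI : P = I
        · simp [hIJ, hJI, hLI, hLJ, hPI]
        · simp [hIJ, hJI, hLI, hLJ, hPI]
      rw [Finset.sum_congr rfl (fun P _ => key P)]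
      simp
    · rw [if_neg hLJ]
      have key : ∀ P : Fin n, (g K P *
          if L = I then (if P = I then uᵀ else if P = J then -1 else 0)
          else if L = J then (if P = I then vᵀ else 0)
          else if P = L then 1 else 0)
          = (if P = L then g K L else 0) := by
        intro P
        by_cases hPL : P = L
        · simp [hIJ, hJI, hLI, hLJ, hPL]
        · simp [hIJ, hJI, hLI, hLJ, hPL]
      rw [Finset.sum_congr rfl (fun P _ => key P)]
      simp

/-- the braid action written as explicit row+column operations -/
lemma bAct_formula (I J : Fin n) (hIJ : I ≠ J) (M : Fin n → Fin n → R) :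
    bAct I J M = (fun K L =>
      let u := (M I J)ᵀ * ((M I I)ᵀ)⁻¹
      let v := M I I * ((M I I)ᵀ)⁻¹
      let g : Fin n → Fin n → R := fun K' L' =>
        if K' = I then u * M I L' - M J L'
        else if K' = J then v * M I L' else M K' L'
      if L = I then g K I * uᵀ - g K J
      else if L = J then g K I * vᵀ else g K L) := by
  rw [bAct, bB_eq_E2 I J hIJ, bmul_E2_left I J hIJ, bmul_E2_right I J hIJ]

end BraidAux
namespace BraidAux

variable {n m : ℕ}

/-- explicit row operation -/
def rowOp (I J : Fin n) (u v : Matrix (Fin m) (Fin m) ℂ)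
    (M : Fin n → Fin n → Matrix (Fin m) (Fin m) ℂ) :
    Fin n → Fin n → Matrix (Fin m) (Fin m) ℂ :=
  fun K L => if K = I then u * M I L - M J L else if K = J then v * M I L else M K L

/-- explicit column operation -/
def colOp (I J : Fin n) (u v : Matrix (Fin m) (Fin m) ℂ)
    (M : Fin n → Fin n → Matrix (Fin m) (Fin m) ℂ) :
    Fin n → Fin n → Matrix (Fin m) (Fin m) ℂ :=
  fun K L => if L = I then M K I * uᵀ - M K J else if L = J then M K I * vᵀ else M K L

lemma bAct_formula' (I J : Fin n) (hIJ : I ≠ J)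
    (M : Fin n → Fin n → Matrix (Fin m) (Fin m) ℂ) :
    bAct I J M = colOp I J ((M I J)ᵀ * ((M I I)ᵀ)⁻¹) (M I I * ((M I I)ᵀ)⁻¹)
      (rowOp I J ((M I J)ᵀ * ((M I I)ᵀ)⁻¹) (M I I * ((M I I)ᵀ)⁻¹) M) := by
  rw [bAct, bB_eq_E2 I J hIJ, bmul_E2_left I J hIJ, bmul_E2_right I J hIJ]
  rfl

/-- conjugation -/
def bConj (P M : Fin n → Fin n → Matrix (Fin m) (Fin m) ℂ) :
    Fin n → Fin n → Matrix (Fin m) (Fin m) ℂ :=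
  bmul (bmul P M) (btrans P)

lemma bAct_eq_bConj (I J : Fin n) (M : Fin n → Fin n → Matrix (Fin m) (Fin m) ℂ) :
    bAct I J M = bConj (bB I J M) M := rfl

lemma bmul_assoc (f g h : Fin n → Fin n → Matrix (Fin m) (Fin m) ℂ) :
    bmul (bmul f g) h = bmul f (bmul g h) := by
  funext K L
  show ∑ Q, (∑ P, f K P * g P Q) * h Q L = ∑ P, f K P * (∑ Q, g P Q * h Q L)
  simp_rw [Finset.sum_mul, Finset.mul_sum, Matrix.mul_assoc]
  exact Finset.sum_comm

lemma btrans_bmul (f g : Fin n → Fin n → Matrix (Fin m) (Fin m) ℂ) :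
    btrans (bmul f g) = bmul (btrans g) (btrans f) := by
  funext K L
  show (∑ P, f L P * g P K)ᵀ = ∑ P, (g P K)ᵀ * (f L P)ᵀ
  rw [Matrix.transpose_sum]
  simp [Matrix.transpose_mul]

lemma bConj_bConj (P Q M : Fin n → Fin n → Matrix (Fin m) (Fin m) ℂ) :
    bConj P (bConj Q M) = bConj (bmul P Q) M := by
  simp only [bConj, btrans_bmul, bmul_assoc]

end BraidAux
namespace BraidAux

section Alg
variable {k : Type*} [Fintype k] [DecidableEq k]
variable (d a b c e : Matrix k k ℂ)

lemma algA (hd : IsUnit d.det) : (d * (dᵀ)⁻¹ * d) * (d * (dᵀ)⁻¹)ᵀ = d := by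
  have hdT : IsUnit (dᵀ).det := by rw [Matrix.det_transpose]; exact hd
  simp [Matrix.mul_assoc, Matrix.transpose_mul, Matrix.transpose_nonsing_inv,
    Matrix.mul_nonsing_inv_cancel_left _ _ hd, Matrix.nonsing_inv_mul_cancel_left _ _ hd,
    Matrix.mul_nonsing_inv_cancel_left _ _ hdT, Matrix.nonsing_inv_mul_cancel_left _ _ hdT,
    Matrix.mul_nonsing_inv _ hd, Matrix.nonsing_inv_mul _ hd,
    Matrix.mul_nonsing_inv _ hdT, Matrix.nonsing_inv_mul _ hdT, sub_mul, mul_sub]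

lemma algB (hd : IsUnit d.det) :
    (aᵀ * (dᵀ)⁻¹ * d - 0) * (aᵀ * (dᵀ)⁻¹)ᵀ - (aᵀ * (dᵀ)⁻¹ * a - e) = e := by
  have hdT : IsUnit (dᵀ).det := by rw [Matrix.det_transpose]; exact hd
  simp [Matrix.mul_assoc, Matrix.transpose_mul, Matrix.transpose_nonsing_inv,
    Matrix.mul_nonsing_inv_cancel_left _ _ hd, Matrix.nonsing_inv_mul_cancel_left _ _ hd,
    Matrix.mul_nonsing_inv_cancel_left _ _ hdT, Matrix.nonsing_inv_mul_cancel_left _ _ hdT,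
    Matrix.mul_nonsing_inv _ hd, Matrix.nonsing_inv_mul _ hd,
    Matrix.mul_nonsing_inv _ hdT, Matrix.nonsing_inv_mul _ hdT, sub_mul, mul_sub]

lemma algC (hd : IsUnit d.det) :
    (aᵀ * (dᵀ)⁻¹ * d - 0) * (d * (dᵀ)⁻¹)ᵀ = aᵀ := by
  have hdT : IsUnit (dᵀ).det := by rw [Matrix.det_transpose]; exact hd
  simp [Matrix.mul_assoc, Matrix.transpose_mul, Matrix.transpose_nonsing_inv,
    Matrix.mul_nonsing_inv_cancel_left _ _ hd, Matrix.nonsing_inv_mul_cancel_left _ _ hd,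
    Matrix.mul_nonsing_inv_cancel_left _ _ hdT, Matrix.nonsing_inv_mul_cancel_left _ _ hdT,
    Matrix.mul_nonsing_inv _ hd, Matrix.nonsing_inv_mul _ hd,
    Matrix.mul_nonsing_inv _ hdT, Matrix.nonsing_inv_mul _ hdT, sub_mul, mul_sub]

lemma algD (hd : IsUnit d.det) :
    aᵀ * ((d * (dᵀ)⁻¹ * c)ᵀ * (dᵀ)⁻¹)ᵀ - (aᵀ * (dᵀ)⁻¹ * c - b) = b := by
  have hdT : IsUnit (dᵀ).det := by rw [Matrix.det_transpose]; exact hd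
  simp [Matrix.mul_assoc, Matrix.transpose_mul, Matrix.transpose_nonsing_inv,
    Matrix.mul_nonsing_inv_cancel_left _ _ hd, Matrix.nonsing_inv_mul_cancel_left _ _ hd,
    Matrix.mul_nonsing_inv_cancel_left _ _ hdT, Matrix.nonsing_inv_mul_cancel_left _ _ hdT,
    Matrix.mul_nonsing_inv _ hd, Matrix.nonsing_inv_mul _ hd,
    Matrix.mul_nonsing_inv _ hdT, Matrix.nonsing_inv_mul _ hdT, sub_mul, mul_sub]

lemma algE1 (hd : IsUnit d.det) :
    (bᵀ * (eᵀ)⁻¹) * (aᵀ * (dᵀ)⁻¹) - ((d * (dᵀ)⁻¹ * c)ᵀ * (dᵀ)⁻¹) * (d * (dᵀ)⁻¹)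
      = (a * ((bᵀ * (eᵀ)⁻¹)ᵀ) - c)ᵀ * (dᵀ)⁻¹ := by
  have hdT : IsUnit (dᵀ).det := by rw [Matrix.det_transpose]; exact hd
  simp [Matrix.mul_assoc, Matrix.transpose_mul, Matrix.transpose_nonsing_inv,
    Matrix.mul_nonsing_inv_cancel_left _ _ hd, Matrix.nonsing_inv_mul_cancel_left _ _ hd,
    Matrix.mul_nonsing_inv_cancel_left _ _ hdT, Matrix.nonsing_inv_mul_cancel_left _ _ hdT,
    Matrix.mul_nonsing_inv _ hd, Matrix.nonsing_inv_mul _ hd,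
    Matrix.mul_nonsing_inv _ hdT, Matrix.nonsing_inv_mul _ hdT, sub_mul, mul_sub]

lemma algE3 (hd : IsUnit d.det) :
    ((d * (dᵀ)⁻¹ * (a * (e * (eᵀ)⁻¹)ᵀ))ᵀ * (dᵀ)⁻¹) * (d * (dᵀ)⁻¹)
      = (e * (eᵀ)⁻¹) * (aᵀ * (dᵀ)⁻¹) := by
  have hdT : IsUnit (dᵀ).det := by rw [Matrix.det_transpose]; exact hd
  simp [Matrix.mul_assoc, Matrix.transpose_mul, Matrix.transpose_nonsing_inv,
    Matrix.mul_nonsing_inv_cancel_left _ _ hd, Matrix.nonsing_inv_mul_cancel_left _ _ hd,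
    Matrix.mul_nonsing_inv_cancel_left _ _ hdT, Matrix.nonsing_inv_mul_cancel_left _ _ hdT,
    Matrix.mul_nonsing_inv _ hd, Matrix.nonsing_inv_mul _ hd,
    Matrix.mul_nonsing_inv _ hdT, Matrix.nonsing_inv_mul _ hdT, sub_mul, mul_sub]

end Alg

variable {n m : ℕ}

set_option maxHeartbeats 1000000 in
lemma E2_braid_prod (I J K : Fin n) (hIJ : I ≠ J) (hIK : I ≠ K) (hJK : J ≠ K)
    (u1 v1 u2 u3 v3 u2r u3r : Matrix (Fin m) (Fin m) ℂ)
    (id1 : u3 * u1 - u2 * v1 = u2r)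
    (id3 : u3r * v1 = v3 * u1) :
    bmul (E2 I J u3 v3) (bmul (E2 J K u2 v1) (E2 I J u1 v1))
      = bmul (E2 J K u3r v1) (bmul (E2 I J u2r v1) (E2 J K u3 v3)) := by
  have hJI' : J ≠ I := hIJ.symm
  have hKI' : K ≠ I := hIK.symm
  have hKJ' : K ≠ J := hJK.symm
  rw [bmul_E2_left J K hJK, bmul_E2_left I J hIJ, bmul_E2_left I J hIJ,
    bmul_E2_left J K hJK]
  funext X Y
  by_cases hXI : X = I
  · by_cases hYI : Y = I
    · simp [E2, hXI, hYI, hIJ, hIK, hJK, hJI', hKI', hKJ', ← id1]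
    · by_cases hYJ : Y = J
      · simp [E2, hXI, hYI, hYJ, hIJ, hIK, hJK, hJI', hKI', hKJ']
      · by_cases hYK : Y = K
        · simp [E2, hXI, hYI, hYJ, hYK, hIJ, hIK, hJK, hJI', hKI', hKJ']
        · have h1 : ¬ I = Y := fun h => hYI h.symm
          have h2 : ¬ J = Y := fun h => hYJ h.symm
          have h3 : ¬ K = Y := fun h => hYK h.symm
          simp [E2, hXI, hYI, hYJ, hYK, hIJ, hIK, hJK, hJI', hKI', hKJ', h1, h2, h3]
  · by_cases hXJ : X = J
    · by_cases hYI : Y = I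
      · simp [E2, hXJ, hXI, hYI, hIJ, hIK, hJK, hJI', hKI', hKJ', id3]
      · by_cases hYJ : Y = J
        · simp [E2, hXJ, hXI, hYI, hYJ, hIJ, hIK, hJK, hJI', hKI', hKJ']
        · by_cases hYK : Y = K
          · simp [E2, hXJ, hXI, hYI, hYJ, hYK, hIJ, hIK, hJK, hJI', hKI', hKJ']
          · have h1 : ¬ I = Y := fun h => hYI h.symm
            have h2 : ¬ J = Y := fun h => hYJ h.symm
            have h3 : ¬ K = Y := fun h => hYK h.symm
            simp [E2, hXJ, hXI, hYI, hYJ, hYK, hIJ, hIK, hJK, hJI', hKI', hKJ',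
              h1, h2, h3]
    · by_cases hXK : X = K
      · by_cases hYI : Y = I
        · simp [E2, hXK, hXI, hXJ, hYI, hIJ, hIK, hJK, hJI', hKI', hKJ']
        · by_cases hYJ : Y = J
          · simp [E2, hXK, hXI, hXJ, hYI, hYJ, hIJ, hIK, hJK, hJI', hKI', hKJ']
          · by_cases hYK : Y = K
            · simp [E2, hXK, hXI, hXJ, hYI, hYJ, hYK, hIJ, hIK, hJK, hJI', hKI', hKJ']
            · have h1 : ¬ I = Y := fun h => hYI h.symm
              have h2 : ¬ J = Y := fun h => hYJ h.symm
              have h3 : ¬ K = Y := fun h => hYK h.symm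
              simp [E2, hXK, hXI, hXJ, hYI, hYJ, hYK, hIJ, hIK, hJK, hJI', hKI', hKJ',
                h1, h2, h3]
      · have hIX : ¬ I = X := fun h => hXI h.symm
        have hJX : ¬ J = X := fun h => hXJ h.symm
        have hKX : ¬ K = X := fun h => hXK h.symm
        simp [E2, hXI, hXJ, hXK, hIX, hJX, hKX]


set_option maxHeartbeats 2000000 in
theorem bAct_braid (I J K : Fin n) (hIJ : I ≠ J) (hIK : I ≠ K) (hJK : J ≠ K)
    (M : Fin n → Fin n → Matrix (Fin m) (Fin m) ℂ)
    (hJI : M J I = 0) (hd : IsUnit (M I I).det) :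
    bAct I J (bAct J K (bAct I J M)) = bAct J K (bAct I J (bAct J K M)) := by
  have hJI' : J ≠ I := hIJ.symm
  have hKI' : K ≠ I := hIK.symm
  have hKJ' : K ≠ J := hJK.symm
  -- entries of A2 = bAct I J M
  have h2JJ : bAct I J M J J = M I I := by
    rw [bAct_formula' I J hIJ]
    simp only [colOp, rowOp, if_pos rfl, if_true, if_neg hIJ, if_neg hIK, if_neg hJK, if_neg hJI', if_neg hKI', if_neg hKJ']
    exact algA _ hd
  have h2JK : bAct I J M J K = M I I * ((M I I)ᵀ)⁻¹ * M I K := by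
    rw [bAct_formula' I J hIJ]
    simp only [colOp, rowOp, if_pos rfl, if_true, if_neg hIJ, if_neg hIK, if_neg hJK, if_neg hJI', if_neg hKI', if_neg hKJ']
  have h2II : bAct I J M I I = M J J := by
    rw [bAct_formula' I J hIJ]
    simp only [colOp, rowOp, if_pos rfl, if_true, if_neg hIJ, if_neg hIK, if_neg hJK, if_neg hJI', if_neg hKI', if_neg hKJ']
    rw [hJI]
    exact algB _ _ _ hd
  have h2IJ : bAct I J M I J = (M I J)ᵀ := by
    rw [bAct_formula' I J hIJ]
    simp only [colOp, rowOp, if_pos rfl, if_true, if_neg hIJ, if_neg hIK, if_neg hJK, if_neg hJI', if_neg hKI', if_neg hKJ']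
    rw [hJI]
    exact algC _ _ hd
  have h2IK : bAct I J M I K = (M I J)ᵀ * ((M I I)ᵀ)⁻¹ * M I K - M J K := by
    rw [bAct_formula' I J hIJ]
    simp only [colOp, rowOp, if_pos rfl, if_true, if_neg hIJ, if_neg hIK, if_neg hJK, if_neg hJI', if_neg hKI', if_neg hKJ']
  -- entries of A3 = bAct J K A2
  have h3II : bAct J K (bAct I J M) I I = M J J := by
    rw [bAct_formula' J K hJK]
    simp only [colOp, rowOp, if_pos rfl, if_true, if_neg hIJ, if_neg hIK, if_neg hJK, if_neg hJI', if_neg hKI', if_neg hKJ']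
    exact h2II
  have h3IJ : bAct J K (bAct I J M) I J = M J K := by
    rw [bAct_formula' J K hJK]
    simp only [colOp, rowOp, if_pos rfl, if_true, if_neg hIJ, if_neg hIK, if_neg hJK, if_neg hJI', if_neg hKI', if_neg hKJ']
    rw [h2IJ, h2IK, h2JK, h2JJ]
    exact algD _ _ _ _ hd
  -- entries of A2r = bAct J K M
  have hr2II : bAct J K M I I = M I I := by
    rw [bAct_formula' J K hJK]
    simp only [colOp, rowOp, if_pos rfl, if_true, if_neg hIJ, if_neg hIK, if_neg hJK, if_neg hJI', if_neg hKI', if_neg hKJ']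
  have hr2IJ : bAct J K M I J
      = M I J * ((M J K)ᵀ * ((M J J)ᵀ)⁻¹)ᵀ - M I K := by
    rw [bAct_formula' J K hJK]
    simp only [colOp, rowOp, if_pos rfl, if_true, if_neg hIJ, if_neg hIK, if_neg hJK, if_neg hJI', if_neg hKI', if_neg hKJ']
  have hr2IK : bAct J K M I K = M I J * (M J J * ((M J J)ᵀ)⁻¹)ᵀ := by
    rw [bAct_formula' J K hJK]
    simp only [colOp, rowOp, if_pos rfl, if_true, if_neg hIJ, if_neg hIK, if_neg hJK, if_neg hJI', if_neg hKI', if_neg hKJ']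
  -- entries of A3r = bAct I J A2r
  have hr3JJ : bAct I J (bAct J K M) J J = M I I := by
    rw [bAct_formula' I J hIJ]
    simp only [colOp, rowOp, if_pos rfl, if_true, if_neg hIJ, if_neg hIK, if_neg hJK, if_neg hJI', if_neg hKI', if_neg hKJ']
    rw [hr2II]
    exact algA _ hd
  have hr3JK : bAct I J (bAct J K M) J K
      = M I I * ((M I I)ᵀ)⁻¹ * (M I J * (M J J * ((M J J)ᵀ)⁻¹)ᵀ) := by
    rw [bAct_formula' I J hIJ]
    simp only [colOp, rowOp, if_pos rfl, if_true, if_neg hIJ, if_neg hIK, if_neg hJK, if_neg hJI', if_neg hKI', if_neg hKJ']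
    rw [hr2II, hr2IK]
  -- the three braid matrices on each side, in E2 form
  have hB1 : bB I J M
      = E2 I J ((M I J)ᵀ * ((M I I)ᵀ)⁻¹) (M I I * ((M I I)ᵀ)⁻¹) :=
    bB_eq_E2 I J hIJ M
  have hB2 : bB J K (bAct I J M)
      = E2 J K ((M I I * ((M I I)ᵀ)⁻¹ * M I K)ᵀ * ((M I I)ᵀ)⁻¹)
          (M I I * ((M I I)ᵀ)⁻¹) := by
    rw [bB_eq_E2 J K hJK, h2JJ, h2JK]
  have hB3 : bB I J (bAct J K (bAct I J M))
      = E2 I J ((M J K)ᵀ * ((M J J)ᵀ)⁻¹) (M J J * ((M J J)ᵀ)⁻¹) := by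
    rw [bB_eq_E2 I J hIJ, h3II, h3IJ]
  have hC1 : bB J K M
      = E2 J K ((M J K)ᵀ * ((M J J)ᵀ)⁻¹) (M J J * ((M J J)ᵀ)⁻¹) :=
    bB_eq_E2 J K hJK M
  have hC2 : bB I J (bAct J K M)
      = E2 I J ((M I J * ((M J K)ᵀ * ((M J J)ᵀ)⁻¹)ᵀ - M I K)ᵀ * ((M I I)ᵀ)⁻¹)
          (M I I * ((M I I)ᵀ)⁻¹) := by
    rw [bB_eq_E2 I J hIJ, hr2II, hr2IJ]
  have hC3 : bB J K (bAct I J (bAct J K M))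
      = E2 J K ((M I I * ((M I I)ᵀ)⁻¹ * (M I J * (M J J * ((M J J)ᵀ)⁻¹)ᵀ))ᵀ
            * ((M I I)ᵀ)⁻¹)
          (M I I * ((M I I)ᵀ)⁻¹) := by
    rw [bB_eq_E2 J K hJK, hr3JJ, hr3JK]
  -- reduce both sides to conjugation by a single product
  have eL : bAct I J (bAct J K (bAct I J M))
      = bConj (bmul (E2 I J ((M J K)ᵀ * ((M J J)ᵀ)⁻¹) (M J J * ((M J J)ᵀ)⁻¹))
          (bmul (E2 J K ((M I I * ((M I I)ᵀ)⁻¹ * M I K)ᵀ * ((M I I)ᵀ)⁻¹)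
              (M I I * ((M I I)ᵀ)⁻¹))
            (E2 I J ((M I J)ᵀ * ((M I I)ᵀ)⁻¹) (M I I * ((M I I)ᵀ)⁻¹)))) M := by
    rw [bAct_eq_bConj I J, hB3, bAct_eq_bConj J K, hB2, bAct_eq_bConj I J, hB1,
      bConj_bConj, bConj_bConj, bmul_assoc]
  have eR : bAct J K (bAct I J (bAct J K M))
      = bConj (bmul (E2 J K ((M I I * ((M I I)ᵀ)⁻¹ * (M I J * (M J J * ((M J J)ᵀ)⁻¹)ᵀ))ᵀ
            * ((M I I)ᵀ)⁻¹) (M I I * ((M I I)ᵀ)⁻¹))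
          (bmul (E2 I J ((M I J * ((M J K)ᵀ * ((M J J)ᵀ)⁻¹)ᵀ - M I K)ᵀ * ((M I I)ᵀ)⁻¹)
              (M I I * ((M I I)ᵀ)⁻¹))
            (E2 J K ((M J K)ᵀ * ((M J J)ᵀ)⁻¹) (M J J * ((M J J)ᵀ)⁻¹)))) M := by
    rw [bAct_eq_bConj J K, hC3, bAct_eq_bConj I J, hC2, bAct_eq_bConj J K, hC1,
      bConj_bConj, bConj_bConj, bmul_assoc]
  rw [eL, eR]
  exact congrArg (fun P => bConj P M)
    (E2_braid_prod I J K hIJ hIK hJK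
      ((M I J)ᵀ * ((M I I)ᵀ)⁻¹) (M I I * ((M I I)ᵀ)⁻¹)
      ((M I I * ((M I I)ᵀ)⁻¹ * M I K)ᵀ * ((M I I)ᵀ)⁻¹)
      ((M J K)ᵀ * ((M J J)ᵀ)⁻¹) (M J J * ((M J J)ᵀ)⁻¹)
      ((M I J * ((M J K)ᵀ * ((M J J)ᵀ)⁻¹)ᵀ - M I K)ᵀ * ((M I I)ᵀ)⁻¹)
      ((M I I * ((M I I)ᵀ)⁻¹ * (M I J * (M J J * ((M J J)ᵀ)⁻¹)ᵀ))ᵀ * ((M I I)ᵀ)⁻¹)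
      (algE1 (M I I) (M I J) (M J K) (M I K) (M J J) hd)
      (algE3 (M I I) (M I J) (M J J) hd))

end BraidAux

/-- the braid relation
`β_{I,I+1} ∘ β_{I+1,I+2} ∘ β_{I,I+1} = β_{I+1,I+2} ∘ β_{I,I+1} ∘ β_{I+1,I+2}`
holds on block-upper-triangular matrices with invertible diagonal blocks. -/
theorem braid_relation (n m : ℕ) (hn : 3 ≤ n) (hm : 1 ≤ m)
    (I I' I'' : Fin n) (hI' : (I' : ℕ) = (I : ℕ) + 1) (hI'' : (I'' : ℕ) = (I : ℕ) + 2)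
    (A : Matrix (Fin (n * m)) (Fin (n * m)) ℂ) (hA : IsBUT n m A)
    (hdiag : ∀ J : Fin n, IsUnit (blk A J J).det) :
    braidAct hm I I' (braidAct hm I' I'' (braidAct hm I I' A))
      = braidAct hm I' I'' (braidAct hm I I' (braidAct hm I' I'' A)) := by
  have hIJ : I ≠ I' := fun h => by rw [← h] at hI'; omega
  have hIK : I ≠ I'' := fun h => by rw [← h] at hI''; omega
  have hJK : I' ≠ I'' := fun h => by rw [← h] at hI''; omega
  have hz : blk A I' I = 0 := by
    funext a b
    apply hA
    show ((I : ℕ) * m + (b : ℕ)) / m < ((I' : ℕ) * m + (a : ℕ)) / m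
    rw [Nat.mul_comm (I : ℕ) m, Nat.mul_add_div hm, Nat.div_eq_of_lt b.isLt,
        Nat.mul_comm (I' : ℕ) m, Nat.mul_add_div hm, Nat.div_eq_of_lt a.isLt]
    omega
  simp only [BraidAux.braidAct_eq hm, BraidAux.blk_toGlob' hm]
  exact congrArg (BraidAux.toGlob hm)
    (BraidAux.bAct_braid I I' I'' hIJ hIK hJK (blk A) hz (hdiag I))
end
end
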